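/- arXiv:1701.00500 — 4 statements merged into one kernel-verified Lean document; each statement's English description precedes it below -/
import Mathlib

section
/- Let X be a δ-hyperbolic geodesic metric space. Then for every C > 0 there exists a C' > 0 such that whenever A and B are (1, C)-quasigeodesic subspaces of X with A ∩ B ≠ ∅, the union A ∪ B is a (1, C')-quasigeodesic subspace of X. -/
/-- `f` restricted to `[0, v]` is a (unit-speed) geodesic: `v ≥ 0` and `f` is an
isometric embedding of `[0, v]` into `X`. -/
def IsGeodesicOn {X : Type*} [MetricSpace X] (f : ℝ → X) (v : ℝ) : Prop :=
  0 ≤ v ∧ ∀ x ∈ Set.Icc (0 : ℝ) v, ∀ y ∈ Set.Icc (0 : ℝ) v, dist (f x) (f y) = |x - y|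

/-- `f : [0, v] → X` is a geodesic from `a` to `b`. -/
def IsGeodesicFrom {X : Type*} [MetricSpace X] (f : ℝ → X) (v : ℝ) (a b : X) : Prop :=
  IsGeodesicOn f v ∧ f 0 = a ∧ f v = b

/-- `X` is a geodesic metric space: any two points are joined by a geodesic. -/
def IsGeodesicSpace (X : Type*) [MetricSpace X] : Prop :=
  ∀ a b : X, ∃ (f : ℝ → X) (v : ℝ), IsGeodesicFrom f v a b

/-- `X` is δ-hyperbolic (in the sense of Gromov, via thin triangles): for any geodesic
triangle with vertices `a`, `b`, `c`, the side `[b, c]` lies in the δ-neighbourhood of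
the union of the sides `[a, b]` and `[a, c]`. -/
def IsDeltaHyperbolic (X : Type*) [MetricSpace X] (δ : ℝ) : Prop :=
  ∀ (a b c : X) (f₁ f₂ f₃ : ℝ → X) (v₁ v₂ v₃ : ℝ),
    IsGeodesicFrom f₁ v₁ a b → IsGeodesicFrom f₂ v₂ b c → IsGeodesicFrom f₃ v₃ a c →
    ∀ x ∈ Set.Icc (0 : ℝ) v₂,
      Metric.infDist (f₂ x) (f₁ '' Set.Icc (0 : ℝ) v₁ ∪ f₃ '' Set.Icc (0 : ℝ) v₃) ≤ δ

/-- `A` is a geodesic subspace of `X`: any two points of `A` are joined by a geodesic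
whose image lies in `A`. -/
def IsGeodesicSubspace {X : Type*} [MetricSpace X] (A : Set X) : Prop :=
  ∀ a ∈ A, ∀ b ∈ A, ∃ (f : ℝ → X) (v : ℝ),
    IsGeodesicFrom f v a b ∧ f '' Set.Icc (0 : ℝ) v ⊆ A

/-- `f` restricted to `[0, v]` is a `(lam, C)`-quasigeodesic. -/
def IsQuasigeodesicOn {X : Type*} [MetricSpace X] (lam C : ℝ) (f : ℝ → X) (v : ℝ) : Prop :=
  0 ≤ v ∧ ∀ x ∈ Set.Icc (0 : ℝ) v, ∀ y ∈ Set.Icc (0 : ℝ) v,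
    lam⁻¹ * |x - y| - C ≤ dist (f x) (f y) ∧ dist (f x) (f y) ≤ lam * |x - y| + C

/-- `A` is a `(lam, C)`-quasigeodesic subspace of `X`: any two points of `A` are joined
by a `(lam, C)`-quasigeodesic whose image lies in `A`. -/
def IsQuasigeodesicSubspace {X : Type*} [MetricSpace X] (lam C : ℝ) (A : Set X) : Prop :=
  ∀ a ∈ A, ∀ b ∈ A, ∃ (f : ℝ → X) (v : ℝ),
    IsQuasigeodesicOn lam C f v ∧ f 0 = a ∧ f v = b ∧ f '' Set.Icc (0 : ℝ) v ⊆ A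

/-- `S` is a geodesic segment: the image of an isometric embedding of a closed interval. -/
def IsGeodesicSegment {X : Type*} [MetricSpace X] (S : Set X) : Prop :=
  ∃ (f : ℝ → X) (v : ℝ), IsGeodesicOn f v ∧ S = f '' Set.Icc (0 : ℝ) v

-- helpers
private lemma abs_sub_of_le' {x y : ℝ} (h : x ≤ y) : |x - y| = y - x := by
  rw [abs_sub_comm, abs_of_nonneg (sub_nonneg.2 h)]

private lemma qg_bounds {X : Type*} [MetricSpace X] {C : ℝ} {f : ℝ → X} {v : ℝ}
    (h : IsQuasigeodesicOn 1 C f v) {x y : ℝ} (hx : x ∈ Set.Icc (0:ℝ) v)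
    (hy : y ∈ Set.Icc (0:ℝ) v) (hxy : x ≤ y) :
    y - x - C ≤ dist (f x) (f y) ∧ dist (f x) (f y) ≤ y - x + C := by
  obtain ⟨h1, h2⟩ := h.2 x hx y hy
  rw [inv_one, one_mul] at h1
  rw [one_mul] at h2
  rw [abs_sub_of_le' hxy] at h1 h2
  exact ⟨h1, h2⟩

private lemma geo_dist {X : Type*} [MetricSpace X] {f : ℝ → X} {v : ℝ}
    (h : IsGeodesicOn f v) {x y : ℝ} (hx : x ∈ Set.Icc (0:ℝ) v)
    (hy : y ∈ Set.Icc (0:ℝ) v) (hxy : x ≤ y) : dist (f x) (f y) = y - x := by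
  rw [h.2 x hx y hy, abs_sub_of_le' hxy]

private lemma qg_mono {X : Type*} [MetricSpace X] {C C' : ℝ} (hCC : C ≤ C')
    {f : ℝ → X} {v : ℝ} (h : IsQuasigeodesicOn 1 C f v) : IsQuasigeodesicOn 1 C' f v := by
  refine ⟨h.1, fun x hx y hy => ?_⟩
  obtain ⟨h1, h2⟩ := h.2 x hx y hy
  constructor <;> [linarith; linarith]

/-- Forward Morse lemma for (1,C)-quasigeodesics: every point of the quasigeodesic is
within `3C/2 + 2 max δ 0 + 2` of any geodesic with the same endpoints. -/
private lemma near_geodesic {X : Type*} [MetricSpace X] {δ : ℝ}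
    (hgeo : IsGeodesicSpace X) (hhyp : IsDeltaHyperbolic X δ)
    {C : ℝ} {g γ : ℝ → X} {u L : ℝ} {a p : X}
    (hg : IsQuasigeodesicOn 1 C g u) (hg0 : g 0 = a) (hgu : g u = p)
    (hγ : IsGeodesicFrom γ L a p) :
    ∀ s ∈ Set.Icc (0:ℝ) u, ∃ r ∈ Set.Icc (0:ℝ) L,
      dist (g s) (γ r) ≤ 3*C/2 + 2*(max δ 0) + 2 := by
  intro s hs
  have hE0 : (0:ℝ) ≤ max δ 0 := le_max_right δ 0
  have hδE : δ ≤ max δ 0 := le_max_left δ 0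
  have hu0 : 0 ≤ u := hg.1
  have hL0 : 0 ≤ L := hγ.1.1
  obtain ⟨f₁, ℓ₁, hf₁⟩ := hgeo (g s) a
  obtain ⟨f₃, ℓ₃, hf₃⟩ := hgeo (g s) p
  have hℓ₁0 : 0 ≤ ℓ₁ := hf₁.1.1
  have hℓ₃0 : 0 ≤ ℓ₃ := hf₃.1.1
  -- lengths
  have hℓ₁ : ℓ₁ = dist (g s) a := by
    have := geo_dist hf₁.1 (Set.left_mem_Icc.2 hℓ₁0) (Set.right_mem_Icc.2 hℓ₁0) hℓ₁0
    rw [hf₁.2.1, hf₁.2.2] at this; linarith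
  have hℓ₃ : ℓ₃ = dist (g s) p := by
    have := geo_dist hf₃.1 (Set.left_mem_Icc.2 hℓ₃0) (Set.right_mem_Icc.2 hℓ₃0) hℓ₃0
    rw [hf₃.2.1, hf₃.2.2] at this; linarith
  have hLd : L = dist a p := by
    have := geo_dist hγ.1 (Set.left_mem_Icc.2 hL0) (Set.right_mem_Icc.2 hL0) hL0
    rw [hγ.2.1, hγ.2.2] at this; linarith
  -- excess bound
  have hex : dist a (g s) + dist (g s) p ≤ L + 3*C := by
    have h1 := (qg_bounds hg (Set.left_mem_Icc.2 hu0) hs hs.1).2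
    have h2 := (qg_bounds hg hs (Set.right_mem_Icc.2 hu0) hs.2).2
    have h3 := (qg_bounds hg (Set.left_mem_Icc.2 hu0) (Set.right_mem_Icc.2 hu0) hu0).1
    rw [hg0] at h1 h3; rw [hgu] at h2 h3
    linarith
  set r : ℝ := (dist a (g s) + L - dist (g s) p)/2 with hr
  have htri1 : dist (g s) p ≤ dist (g s) a + dist a p := dist_triangle _ _ _
  have htri2 : dist a (g s) ≤ dist a p + dist p (g s) := dist_triangle _ _ _
  have hda : dist (g s) a = dist a (g s) := dist_comm _ _
  have hdp : dist p (g s) = dist (g s) p := dist_comm _ _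
  have hr0 : 0 ≤ r := by rw [hr]; rw [hLd]; linarith
  have hrL : r ≤ L := by rw [hr]; rw [hLd]; linarith
  refine ⟨r, ⟨hr0, hrL⟩, ?_⟩
  have happ := hhyp (g s) a p f₁ γ f₃ ℓ₁ L ℓ₃ hf₁ hγ hf₃ r ⟨hr0, hrL⟩
  have hne : (f₁ '' Set.Icc (0:ℝ) ℓ₁ ∪ f₃ '' Set.Icc (0:ℝ) ℓ₃).Nonempty :=
    ⟨f₁ 0, Or.inl ⟨0, Set.left_mem_Icc.2 hℓ₁0, rfl⟩⟩
  have hlt : Metric.infDist (γ r) (f₁ '' Set.Icc (0:ℝ) ℓ₁ ∪ f₃ '' Set.Icc (0:ℝ) ℓ₃)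
      < max δ 0 + 1 := lt_of_le_of_lt (le_trans happ hδE) (by linarith)
  obtain ⟨y, hyU, hdy⟩ := (Metric.infDist_lt_iff hne).1 hlt
  have hdaγ : dist a (γ r) = r := by
    have := geo_dist hγ.1 (Set.left_mem_Icc.2 hL0) ⟨hr0, hrL⟩ hr0
    rw [hγ.2.1] at this; linarith
  have hdpγ : dist (γ r) p = L - r := by
    have := geo_dist hγ.1 ⟨hr0, hrL⟩ (Set.right_mem_Icc.2 hL0) hrL
    rw [hγ.2.2] at this; linarith
  rcases hyU with hy1 | hy3
  · obtain ⟨q, hq, rfl⟩ := hy1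
    have hdxq : dist (g s) (f₁ q) = q := by
      have := geo_dist hf₁.1 (Set.left_mem_Icc.2 hℓ₁0) hq hq.1
      rw [hf₁.2.1] at this; linarith
    have hdqa : dist (f₁ q) a = ℓ₁ - q := by
      have := geo_dist hf₁.1 hq (Set.right_mem_Icc.2 hℓ₁0) hq.2
      rw [hf₁.2.2] at this; linarith
    -- r ≤ dist a (f₁ q) + dist (f₁ q) (γ r) ≤ (ℓ₁ - q) + (max δ 0 + 1)
    have t1 : dist a (γ r) ≤ dist a (f₁ q) + dist (f₁ q) (γ r) := dist_triangle _ _ _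
    have t2 : dist (g s) (γ r) ≤ dist (g s) (f₁ q) + dist (f₁ q) (γ r) := dist_triangle _ _ _
    have e1 : dist a (f₁ q) = ℓ₁ - q := by rw [dist_comm]; exact hdqa
    have e2 : dist (f₁ q) (γ r) = dist (γ r) (f₁ q) := dist_comm _ _
    rw [hr] at *
    rw [hℓ₁, hda] at *
    linarith [hdy, hdaγ, hdxq]
  · obtain ⟨q, hq, rfl⟩ := hy3
    have hdxq : dist (g s) (f₃ q) = q := by
      have := geo_dist hf₃.1 (Set.left_mem_Icc.2 hℓ₃0) hq hq.1
      rw [hf₃.2.1] at this; linarith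
    have hdqp : dist (f₃ q) p = ℓ₃ - q := by
      have := geo_dist hf₃.1 hq (Set.right_mem_Icc.2 hℓ₃0) hq.2
      rw [hf₃.2.2] at this; linarith
    have t1 : dist (γ r) p ≤ dist (γ r) (f₃ q) + dist (f₃ q) p := dist_triangle _ _ _
    have t2 : dist (g s) (γ r) ≤ dist (g s) (f₃ q) + dist (f₃ q) (γ r) := dist_triangle _ _ _
    have e2 : dist (f₃ q) (γ r) = dist (γ r) (f₃ q) := dist_comm _ _
    rw [hr] at *
    rw [hℓ₃] at *
    linarith [hdy, hdpγ, hdxq]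

/-- Reverse Morse: every point of the geodesic is close to the quasigeodesic. -/
private lemma geodesic_near_qg {X : Type*} [MetricSpace X] {C R : ℝ} (hR : 0 ≤ R)
    {g γ : ℝ → X} {u L : ℝ}
    (hg : IsQuasigeodesicOn 1 C g u) (hγ : IsGeodesicOn γ L)
    (h0 : g 0 = γ 0) (h1 : g u = γ L)
    (hfm : ∀ s ∈ Set.Icc (0:ℝ) u, ∃ r ∈ Set.Icc (0:ℝ) L, dist (g s) (γ r) ≤ R) :
    ∀ r ∈ Set.Icc (0:ℝ) L, ∃ s ∈ Set.Icc (0:ℝ) u, dist (γ r) (g s) ≤ 3*R + C + 2 := by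
  intro r hr
  have hu0 : 0 ≤ u := hg.1
  have hL0 : 0 ≤ L := hγ.1
  set S : Set ℝ := {z | z ∈ Set.Icc (0:ℝ) u ∧
      ∃ rr, rr ∈ Set.Icc (0:ℝ) L ∧ rr ≤ r ∧ dist (g z) (γ rr) ≤ R} with hS
  have h0S : (0:ℝ) ∈ S := by
    refine ⟨Set.left_mem_Icc.2 hu0, 0, Set.left_mem_Icc.2 hL0, hr.1, ?_⟩
    rw [h0, dist_self]; exact hR
  have hSne : S.Nonempty := ⟨0, h0S⟩
  have hSbdd : BddAbove S := ⟨u, fun z hz => hz.1.2⟩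
  set σ : ℝ := sSup S with hσ
  have hσ0 : 0 ≤ σ := le_csSup hSbdd h0S
  have hσu : σ ≤ u := csSup_le hSne (fun z hz => hz.1.2)
  obtain ⟨s₁, hs₁S, hs₁gt⟩ := exists_lt_of_lt_csSup hSne (show σ - 1 < σ by linarith)
  have hs₁le : s₁ ≤ σ := le_csSup hSbdd hs₁S
  obtain ⟨hs₁I, r1, hr1I, hr1le, hd1⟩ := hs₁S
  -- a point slightly above σ whose near-point on γ is at parameter ≥ r
  have hstep : ∃ s₂ ∈ Set.Icc (0:ℝ) u, ∃ r2, r2 ∈ Set.Icc (0:ℝ) L ∧ r ≤ r2 ∧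
      dist (g s₂) (γ r2) ≤ R ∧ σ ≤ s₂ ∧ s₂ ≤ σ + 1 := by
    set s₂ : ℝ := min u (σ + 1) with hs₂
    have hs₂I : s₂ ∈ Set.Icc (0:ℝ) u := ⟨le_min hu0 (by linarith), min_le_left _ _⟩
    have hσs₂ : σ ≤ s₂ := le_min hσu (by linarith)
    have hs₂le : s₂ ≤ σ + 1 := min_le_right _ _
    rcases eq_or_lt_of_le hσs₂ with heq | hlt
    · -- then σ = u
      have hσequ : σ = u := by
        rcases le_total u (σ + 1) with hc | hc
        · rw [hs₂, min_eq_left hc] at heq; exact heq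
        · rw [hs₂, min_eq_right hc] at heq; linarith
      refine ⟨u, Set.right_mem_Icc.2 hu0, L, Set.right_mem_Icc.2 hL0, hr.2, ?_, by linarith, by linarith⟩
      rw [h1, dist_self]; exact hR
    · have hs₂nS : s₂ ∉ S := fun hmem => absurd (le_csSup hSbdd hmem) (not_le.2 hlt)
      obtain ⟨r', hr'I, hd'⟩ := hfm s₂ hs₂I
      have hrr' : r ≤ r' := by
        by_contra hcon
        exact hs₂nS ⟨hs₂I, r', hr'I, le_of_not_ge hcon, hd'⟩
      exact ⟨s₂, hs₂I, r', hr'I, hrr', hd', hσs₂, hs₂le⟩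
  obtain ⟨s₂, hs₂I, r2, hr2I, hrr2, hd2, hσs₂, hs₂le⟩ := hstep
  -- now combine
  have hs₁s₂ : s₁ ≤ s₂ := le_trans hs₁le hσs₂
  have hgd : dist (g s₁) (g s₂) ≤ (s₂ - s₁) + C := (qg_bounds hg hs₁I hs₂I hs₁s₂).2
  have hr12 : r1 ≤ r2 := le_trans hr1le hrr2
  have hγ12 : dist (γ r1) (γ r2) = r2 - r1 := geo_dist hγ hr1I hr2I hr12
  have htri : dist (γ r1) (γ r2) ≤ dist (γ r1) (g s₁) + dist (g s₁) (g s₂) + dist (g s₂) (γ r2) :=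
    dist_triangle4 _ _ _ _
  have hc1 : dist (γ r1) (g s₁) = dist (g s₁) (γ r1) := dist_comm _ _
  have hγr : dist (γ r) (γ r1) = r - r1 := by
    rw [dist_comm]; exact geo_dist hγ hr1I hr hr1le
  refine ⟨s₁, hs₁I, ?_⟩
  have htri2 : dist (γ r) (g s₁) ≤ dist (γ r) (γ r1) + dist (γ r1) (g s₁) := dist_triangle _ _ _
  linarith

/-- Splitting a thin triangle: points `x1 ≤ x2` on `[a,b]`, at most 2 apart, with
`γ3 x1` close to the side `[a,p]` and `γ3 x2` close to the side `[p,b]`. -/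
private lemma thin_split {X : Type*} [MetricSpace X] {δ : ℝ} (hhyp : IsDeltaHyperbolic X δ)
    {γ1 γ2 γ3 : ℝ → X} {L1 L2 D : ℝ} {a p b : X}
    (h1 : IsGeodesicFrom γ1 L1 a p) (h2 : IsGeodesicFrom γ2 L2 p b)
    (h3 : IsGeodesicFrom γ3 D a b) :
    ∃ x1 ∈ Set.Icc (0:ℝ) D, ∃ x2 ∈ Set.Icc (0:ℝ) D, ∃ r1 ∈ Set.Icc (0:ℝ) L1,
      ∃ r2 ∈ Set.Icc (0:ℝ) L2, x1 ≤ x2 ∧ x2 - x1 ≤ 2 ∧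
      dist (γ3 x1) (γ1 r1) ≤ max δ 0 + 1 ∧ dist (γ3 x2) (γ2 r2) ≤ max δ 0 + 1 := by
  have hE0 : (0:ℝ) ≤ max δ 0 := le_max_right δ 0
  have hδE : δ ≤ max δ 0 := le_max_left δ 0
  have hL10 : 0 ≤ L1 := h1.1.1
  have hL20 : 0 ≤ L2 := h2.1.1
  have hD0 : 0 ≤ D := h3.1.1
  -- reversed γ1 : from p to a
  set f₁ : ℝ → X := fun z => γ1 (L1 - z) with hf₁def
  have hf₁ : IsGeodesicFrom f₁ L1 p a := by
    refine ⟨⟨hL10, fun x hx y hy => ?_⟩, ?_, ?_⟩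
    · show dist (γ1 (L1 - x)) (γ1 (L1 - y)) = |x - y|
      have hx' : L1 - x ∈ Set.Icc (0:ℝ) L1 := ⟨by linarith [hx.2], by linarith [hx.1]⟩
      have hy' : L1 - y ∈ Set.Icc (0:ℝ) L1 := ⟨by linarith [hy.2], by linarith [hy.1]⟩
      rw [h1.1.2 _ hx' _ hy']
      rw [show L1 - x - (L1 - y) = y - x by ring, abs_sub_comm]
    · show γ1 (L1 - 0) = p
      rw [sub_zero, h1.2.2]
    · show γ1 (L1 - L1) = a
      rw [sub_self, h1.2.1]
  set S : Set ℝ := {z | z ∈ Set.Icc (0:ℝ) D ∧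
      ∃ r1, r1 ∈ Set.Icc (0:ℝ) L1 ∧ dist (γ3 z) (γ1 r1) ≤ max δ 0 + 1} with hS
  have h0S : (0:ℝ) ∈ S := by
    refine ⟨Set.left_mem_Icc.2 hD0, 0, Set.left_mem_Icc.2 hL10, ?_⟩
    rw [h3.2.1, h1.2.1, dist_self]; linarith
  have hSne : S.Nonempty := ⟨0, h0S⟩
  have hSbdd : BddAbove S := ⟨D, fun z hz => hz.1.2⟩
  set σ : ℝ := sSup S with hσ
  have hσ0 : 0 ≤ σ := le_csSup hSbdd h0S
  have hσD : σ ≤ D := csSup_le hSne (fun z hz => hz.1.2)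
  obtain ⟨x1, hx1S, hx1gt⟩ := exists_lt_of_lt_csSup hSne (show σ - 1 < σ by linarith)
  have hx1le : x1 ≤ σ := le_csSup hSbdd hx1S
  obtain ⟨hx1I, r1, hr1I, hd1⟩ := hx1S
  have hstep : ∃ x2 ∈ Set.Icc (0:ℝ) D, ∃ r2, r2 ∈ Set.Icc (0:ℝ) L2 ∧
      dist (γ3 x2) (γ2 r2) ≤ max δ 0 + 1 ∧ σ ≤ x2 ∧ x2 ≤ σ + 1 := by
    set x2 : ℝ := min D (σ + 1) with hx2
    have hx2I : x2 ∈ Set.Icc (0:ℝ) D := ⟨le_min hD0 (by linarith), min_le_left _ _⟩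
    have hσx2 : σ ≤ x2 := le_min hσD (by linarith)
    have hx2le : x2 ≤ σ + 1 := min_le_right _ _
    rcases eq_or_lt_of_le hσx2 with heq | hlt
    · have hσeqD : σ = D := by
        rcases le_total D (σ + 1) with hc | hc
        · rw [hx2, min_eq_left hc] at heq; exact heq
        · rw [hx2, min_eq_right hc] at heq; linarith
      refine ⟨D, Set.right_mem_Icc.2 hD0, L2, Set.right_mem_Icc.2 hL20, ?_, by linarith, by linarith⟩
      rw [h3.2.2, h2.2.2, dist_self]; linarith
    · have hx2nS : x2 ∉ S := fun hmem => absurd (le_csSup hSbdd hmem) (not_le.2 hlt)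
      have happ := hhyp p a b f₁ γ3 γ2 L1 D L2 hf₁ h3 h2 x2 hx2I
      have hne : (f₁ '' Set.Icc (0:ℝ) L1 ∪ γ2 '' Set.Icc (0:ℝ) L2).Nonempty :=
        ⟨f₁ 0, Or.inl ⟨0, Set.left_mem_Icc.2 hL10, rfl⟩⟩
      have hlt2 : Metric.infDist (γ3 x2) (f₁ '' Set.Icc (0:ℝ) L1 ∪ γ2 '' Set.Icc (0:ℝ) L2)
          < max δ 0 + 1 := lt_of_le_of_lt (le_trans happ hδE) (by linarith)
      obtain ⟨y, hyU, hdy⟩ := (Metric.infDist_lt_iff hne).1 hlt2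
      rcases hyU with hy1 | hy2
      · exfalso
        obtain ⟨q, hq, rfl⟩ := hy1
        refine hx2nS ⟨hx2I, L1 - q, ⟨by linarith [hq.2], by linarith [hq.1]⟩, ?_⟩
        exact le_of_lt hdy
      · obtain ⟨q, hq, rfl⟩ := hy2
        exact ⟨x2, hx2I, q, hq, le_of_lt hdy, hσx2, hx2le⟩
  obtain ⟨x2, hx2I, r2, hr2I, hd2, hσx2, hx2le⟩ := hstep
  exact ⟨x1, hx1I, x2, hx2I, r1, hr1I, r2, hr2I, le_trans hx1le hσx2, by linarith,
    hd1, hd2⟩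

/-- The crossing case: a quasigeodesic from `a ∈ A` to `b ∈ B` inside `A ∪ B`. -/
private lemma cross_qg {X : Type*} [MetricSpace X] {δ : ℝ}
    (hgeo : IsGeodesicSpace X) (hhyp : IsDeltaHyperbolic X δ)
    {C : ℝ} (hC : 0 < C) {A B : Set X}
    (hA : IsQuasigeodesicSubspace 1 C A) (hB : IsQuasigeodesicSubspace 1 C B)
    {p a b : X} (hpA : p ∈ A) (hpB : p ∈ B) (ha : a ∈ A) (hb : b ∈ B) :
    ∃ (f : ℝ → X) (v : ℝ), IsQuasigeodesicOn 1 (37*C + 42*(max δ 0) + 59) f v ∧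
      f 0 = a ∧ f v = b ∧ f '' Set.Icc (0:ℝ) v ⊆ A ∪ B := by
  obtain ⟨g, u, hg, hg0, hgu, hgA⟩ := hA a ha p hpA
  obtain ⟨h, w, hh, hh0, hhw, hhB⟩ := hB p hpB b hb
  obtain ⟨γ1, L1, hγ1⟩ := hgeo a p
  obtain ⟨γ2, L2, hγ2⟩ := hgeo p b
  obtain ⟨γ3, D, hγ3⟩ := hgeo a b
  have hE0 : (0:ℝ) ≤ max δ 0 := le_max_right δ 0
  have hu0 : 0 ≤ u := hg.1
  have hw0 : 0 ≤ w := hh.1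
  have hD0 : 0 ≤ D := hγ3.1.1
  have hL10 : 0 ≤ L1 := hγ1.1.1
  have hL20 : 0 ≤ L2 := hγ2.1.1
  -- abbreviations for the constants
  obtain ⟨E, hE⟩ : ∃ E : ℝ, E = max δ 0 := ⟨_, rfl⟩
  rw [← hE] at hE0 ⊢
  obtain ⟨R, hRdef⟩ : ∃ R : ℝ, R = 3*C/2 + 2*E + 2 := ⟨_, rfl⟩
  obtain ⟨R', hR'def⟩ : ∃ R' : ℝ, R' = 3*R + C + 2 := ⟨_, rfl⟩
  obtain ⟨K, hKdef⟩ : ∃ K : ℝ, K = 2*R' + 2*E + 4 := ⟨_, rfl⟩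
  have hR0 : (0:ℝ) ≤ R := by rw [hRdef]; linarith
  have hK0 : (0:ℝ) < K := by rw [hKdef, hR'def, hRdef]; linarith
  -- split the triangle
  obtain ⟨x1, hx1I, x2, hx2I, r1, hr1I, r2, hr2I, hx12, hx21, hc1, hc2⟩ :=
    thin_split hhyp hγ1 hγ2 hγ3
  -- morse on both sides
  have hfm1 := near_geodesic hgeo hhyp hg hg0 hgu hγ1
  have hfm2 := near_geodesic hgeo hhyp hh hh0 hhw hγ2
  have hfm1' : ∀ s ∈ Set.Icc (0:ℝ) u, ∃ r ∈ Set.Icc (0:ℝ) L1, dist (g s) (γ1 r) ≤ R := by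
    intro s hs; obtain ⟨r, hrI, hd⟩ := hfm1 s hs
    exact ⟨r, hrI, by rw [hRdef, hE]; exact hd⟩
  have hfm2' : ∀ s ∈ Set.Icc (0:ℝ) w, ∃ r ∈ Set.Icc (0:ℝ) L2, dist (h s) (γ2 r) ≤ R := by
    intro s hs; obtain ⟨r, hrI, hd⟩ := hfm2 s hs
    exact ⟨r, hrI, by rw [hRdef, hE]; exact hd⟩
  obtain ⟨s, hsI, hs_near⟩ := geodesic_near_qg hR0 hg hγ1.1
      (hg0.trans hγ1.2.1.symm) (hgu.trans hγ1.2.2.symm) hfm1' r1 hr1I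
  obtain ⟨t, htI, ht_near⟩ := geodesic_near_qg hR0 hh hγ2.1
      (hh0.trans hγ2.2.1.symm) (hhw.trans hγ2.2.2.symm) hfm2' r2 hr2I
  have hs_near' : dist (γ1 r1) (g s) ≤ R' := by rw [hR'def]; exact hs_near
  have ht_near' : dist (γ2 r2) (h t) ≤ R' := by rw [hR'def]; exact ht_near
  clear hs_near ht_near hfm1 hfm2 hfm1' hfm2'
  rw [← hE] at hc1 hc2
  -- geodesic distance facts on γ3
  have hab : dist a b = D := by
    have := geo_dist hγ3.1 (Set.left_mem_Icc.2 hD0) (Set.right_mem_Icc.2 hD0) hD0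
    rw [hγ3.2.1, hγ3.2.2] at this; linarith
  have hax1 : dist a (γ3 x1) = x1 := by
    have := geo_dist hγ3.1 (Set.left_mem_Icc.2 hD0) hx1I hx1I.1
    rw [hγ3.2.1] at this; linarith
  have hx2b : dist (γ3 x2) b = D - x2 := by
    have := geo_dist hγ3.1 hx2I (Set.right_mem_Icc.2 hD0) hx2I.2
    rw [hγ3.2.2] at this; linarith
  have hx1x2 : dist (γ3 x1) (γ3 x2) = x2 - x1 := geo_dist hγ3.1 hx1I hx2I hx12
  -- key splice estimates
  have hs_le : s ≤ x1 + E + 1 + R' + C := by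
    have hlow := (qg_bounds hg (Set.left_mem_Icc.2 hu0) hsI hsI.1).1
    rw [hg0] at hlow
    have h4 : dist a (g s) ≤ dist a (γ3 x1) + dist (γ3 x1) (γ1 r1) + dist (γ1 r1) (g s) :=
      dist_triangle4 _ _ _ _
    rw [hax1] at h4
    linarith
  have ht_le : w - t ≤ (D - x2) + E + 1 + R' + C := by
    have hlow := (qg_bounds hh htI (Set.right_mem_Icc.2 hw0) htI.2).1
    rw [hhw] at hlow
    have h4 : dist (h t) b ≤ dist (h t) (γ2 r2) + dist (γ2 r2) (γ3 x2) + dist (γ3 x2) b :=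
      dist_triangle4 _ _ _ _
    rw [hx2b] at h4
    have e1 : dist (h t) (γ2 r2) = dist (γ2 r2) (h t) := dist_comm _ _
    have e2 : dist (γ2 r2) (γ3 x2) = dist (γ3 x2) (γ2 r2) := dist_comm _ _
    linarith
  have hjump : dist (g s) (h t) ≤ K := by
    have h4 : dist (g s) (h t) ≤ dist (g s) (γ1 r1) + dist (γ1 r1) (γ2 r2) + dist (γ2 r2) (h t) :=
      dist_triangle4 _ _ _ _
    have h5 : dist (γ1 r1) (γ2 r2) ≤
        dist (γ1 r1) (γ3 x1) + dist (γ3 x1) (γ3 x2) + dist (γ3 x2) (γ2 r2) :=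
      dist_triangle4 _ _ _ _
    have e1 : dist (g s) (γ1 r1) = dist (γ1 r1) (g s) := dist_comm _ _
    have e2 : dist (γ1 r1) (γ3 x1) = dist (γ3 x1) (γ1 r1) := dist_comm _ _
    rw [hx1x2] at h5
    rw [hKdef]
    linarith
  have hsum : s + (w - t) ≤ dist a b + (2*E + 2 + 2*R' + 2*C) := by
    rw [hab]; linarith
  clear hs_near' ht_near' hc1 hc2 hax1 hx2b hx1x2 hx1I hr1I hr2I hx12 hx21
  -- the concatenated map
  obtain ⟨v, hvdef⟩ : ∃ v : ℝ, v = s + K + (w - t) := ⟨_, rfl⟩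
  have htw : t ≤ w := htI.2
  have hs0 : 0 ≤ s := hsI.1
  have ht0 : 0 ≤ t := htI.1
  have hsu : s ≤ u := hsI.2
  have hv0 : 0 ≤ v := by rw [hvdef]; linarith
  set f : ℝ → X := fun x => if x ≤ s then g x else if x < s + K then g s
      else h (x - (s + K) + t) with hfdef
  have hfI : ∀ x, x ≤ s → f x = g x := by
    intro x hx; rw [hfdef]; simp only [if_pos hx]
  have hfII : ∀ x, ¬x ≤ s → x < s + K → f x = g s := by
    intro x hx1 hx2; rw [hfdef]; simp only [if_neg hx1, if_pos hx2]
  have hfIII : ∀ x, ¬x ≤ s → ¬x < s + K → f x = h (x - (s + K) + t) := by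
    intro x hx1 hx2; rw [hfdef]; simp only [if_neg hx1, if_neg hx2]
  have harg : ∀ x, ¬x < s + K → x ≤ v → x - (s + K) + t ∈ Set.Icc (0:ℝ) w ∧
      t ≤ x - (s + K) + t := by
    intro x hx1 hx2
    have : s + K ≤ x := le_of_not_gt hx1
    rw [hvdef] at hx2
    exact ⟨⟨by linarith, by linarith⟩, by linarith⟩
  refine ⟨f, v, ⟨hv0, ?_⟩, ?_, ?_, ?_⟩
  · -- the quasigeodesic bounds
    have key : ∀ x ∈ Set.Icc (0:ℝ) v, ∀ y ∈ Set.Icc (0:ℝ) v, x ≤ y →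
        y - x - (37*C + 42*E + 59) ≤ dist (f x) (f y) ∧
        dist (f x) (f y) ≤ y - x + (37*C + 42*E + 59) := by
      intro x hx y hy hxy
      by_cases hys : y ≤ s
      · -- both on g
        have hxs : x ≤ s := le_trans hxy hys
        rw [hfI x hxs, hfI y hys]
        have := qg_bounds hg ⟨hx.1, le_trans hxs hsu⟩ ⟨hy.1, le_trans hys hsu⟩ hxy
        constructor <;> linarith [this.1, this.2]
      · by_cases hyK : y < s + K
        · -- y in the pad
          rw [hfII y hys hyK]
          by_cases hxs : x ≤ s
          · rw [hfI x hxs]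
            have := qg_bounds hg ⟨hx.1, le_trans hxs hsu⟩ hsI hxs
            constructor <;> linarith [this.1, this.2, hK0]
          · rw [hfII x hxs (lt_of_le_of_lt hxy hyK)]
            rw [dist_self]
            constructor <;> linarith [lt_of_not_ge hxs]
        · -- y on h
          obtain ⟨htyI, htty⟩ := harg y hyK hy.2
          rw [hfIII y hys hyK]
          have hhty := qg_bounds hh htI htyI htty
          by_cases hxs : x ≤ s
          · -- x on g, y on h : the crucial case
            rw [hfI x hxs]
            have hxu : x ∈ Set.Icc (0:ℝ) u := ⟨hx.1, le_trans hxs hsu⟩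
            have hgx := qg_bounds hg hxu hsI hxs
            constructor
            · -- lower bound
              have d1 : dist a (g x) ≤ x + C := by
                have := (qg_bounds hg (Set.left_mem_Icc.2 hu0) hxu hx.1).2
                rw [hg0] at this; linarith
              have d2 : dist (h (y - (s+K) + t)) b ≤ (w - (y - (s+K) + t)) + C := by
                have := (qg_bounds hh htyI (Set.right_mem_Icc.2 hw0) htyI.2).2
                rw [hhw] at this; linarith
              have t1 : dist a b ≤ dist a (h (y - (s+K) + t)) + dist (h (y - (s+K) + t)) b :=
                dist_triangle _ _ _
              have t2 : dist a (h (y - (s+K) + t)) ≤ dist a (g x) + dist (g x) (h (y - (s+K) + t)) :=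
                dist_triangle _ _ _
              have hKR : K = 2*R' + 2*E + 4 := hKdef
              have hRR : R' = 3*R + C + 2 := hR'def
              have hRR2 : R = 3*C/2 + 2*E + 2 := hRdef
              linarith [hsum]
            · -- upper bound
              have t3 : dist (g x) (h (y - (s+K) + t)) ≤
                  dist (g x) (g s) + dist (g s) (h t) + dist (h t) (h (y - (s+K) + t)) :=
                dist_triangle4 _ _ _ _
              have hKR : K = 2*R' + 2*E + 4 := hKdef
              have hRR : R' = 3*R + C + 2 := hR'def
              have hRR2 : R = 3*C/2 + 2*E + 2 := hRdef
              linarith [hgx.2, hhty.2, hjump]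
          · by_cases hxK : x < s + K
            · -- x in pad, y on h
              rw [hfII x hxs hxK]
              have hKR : K = 2*R' + 2*E + 4 := hKdef
              have hRR : R' = 3*R + C + 2 := hR'def
              have hRR2 : R = 3*C/2 + 2*E + 2 := hRdef
              have hxgt : s < x := lt_of_not_ge hxs
              constructor
              · have t1 : dist (h t) (h (y - (s+K) + t)) ≤
                    dist (h t) (g s) + dist (g s) (h (y - (s+K) + t)) := dist_triangle _ _ _
                have e1 : dist (h t) (g s) = dist (g s) (h t) := dist_comm _ _
                linarith [hhty.1, hjump]
              · have t2 : dist (g s) (h (y - (s+K) + t)) ≤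
                    dist (g s) (h t) + dist (h t) (h (y - (s+K) + t)) := dist_triangle _ _ _
                linarith [hhty.2, hjump]
            · -- both on h
              obtain ⟨htxI, httx⟩ := harg x hxK hx.2
              rw [hfIII x hxs hxK]
              have := qg_bounds hh htxI htyI (by linarith)
              have hKR : K = 2*R' + 2*E + 4 := hKdef
              constructor <;> linarith [this.1, this.2]
    intro x hx y hy
    rcases le_total x y with hxy | hxy
    · obtain ⟨k1, k2⟩ := key x hx y hy hxy
      simp only [inv_one, one_mul]
      rw [abs_sub_of_le' hxy]
      exact ⟨k1, k2⟩
    · obtain ⟨k1, k2⟩ := key y hy x hx hxy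
      rw [dist_comm (f y) (f x)] at k1 k2
      simp only [inv_one, one_mul]
      rw [abs_sub_comm, abs_sub_of_le' hxy]
      exact ⟨k1, k2⟩
  · rw [hfI 0 hs0, hg0]
  · have h1 : ¬v ≤ s := by rw [hvdef]; push_neg; linarith
    have h2 : ¬v < s + K := by rw [hvdef]; push_neg; linarith
    rw [hfIII v h1 h2]
    rw [show v - (s + K) + t = w by rw [hvdef]; ring, hhw]
  · rintro z ⟨x, hxI, rfl⟩
    by_cases hxs : x ≤ s
    · rw [hfI x hxs]
      exact Or.inl (hgA ⟨x, ⟨hxI.1, le_trans hxs hsu⟩, rfl⟩)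
    · by_cases hxK : x < s + K
      · rw [hfII x hxs hxK]
        exact Or.inl (hgA ⟨s, hsI, rfl⟩)
      · rw [hfIII x hxs hxK]
        obtain ⟨htxI, _⟩ := harg x hxK hxI.2
        exact Or.inr (hhB ⟨_, htxI, rfl⟩)


/-- In a δ-hyperbolic geodesic space, for every C > 0 there is C' > 0 such
that the union of two intersecting (1, C)-quasigeodesic subspaces is a
(1, C')-quasigeodesic subspace. -/
theorem union_of_one_quasigeodesic_subspaces {X : Type*} [MetricSpace X] (δ : ℝ)
    (hgeo : IsGeodesicSpace X) (hhyp : IsDeltaHyperbolic X δ) :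
    ∀ C : ℝ, 0 < C → ∃ C' : ℝ, 0 < C' ∧
      ∀ A B : Set X, IsQuasigeodesicSubspace 1 C A → IsQuasigeodesicSubspace 1 C B →
        (A ∩ B).Nonempty → IsQuasigeodesicSubspace 1 C' (A ∪ B) := by
  intro C hC
  have hE0 : (0:ℝ) ≤ max δ 0 := le_max_right δ 0
  refine ⟨37*C + 42*(max δ 0) + 59, by linarith, ?_⟩
  intro A B hA hB ⟨p, hpA, hpB⟩
  have hCC' : C ≤ 37*C + 42*(max δ 0) + 59 := by linarith
  intro a ha b hb
  rcases ha with haA | haB <;> rcases hb with hbA | hbB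
  · obtain ⟨f, v, hf, h0, h1, him⟩ := hA a haA b hbA
    exact ⟨f, v, qg_mono hCC' hf, h0, h1, him.trans Set.subset_union_left⟩
  · obtain ⟨f, v, hf, h0, h1, him⟩ := cross_qg hgeo hhyp hC hA hB hpA hpB haA hbB
    exact ⟨f, v, hf, h0, h1, him⟩
  · obtain ⟨f, v, hf, h0, h1, him⟩ := cross_qg hgeo hhyp hC hB hA hpB hpA haB hbA
    rw [Set.union_comm B A] at him
    exact ⟨f, v, hf, h0, h1, him⟩
  · obtain ⟨f, v, hf, h0, h1, him⟩ := hB a haB b hbB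
    exact ⟨f, v, qg_mono hCC' hf, h0, h1, him.trans Set.subset_union_right⟩
end

section
/- Let X be a δ-hyperbolic geodesic metric space. Then for every λ > 0 and C > 0 there exist λ' > 0 and C' > 0 such that whenever A and B are (λ, C)-quasigeodesic subspaces of X with A ∩ B ≠ ∅, the union A ∪ B is a (λ', C')-quasigeodesic subspace of X. -/
section
open Set Metric
variable {X : Type*} [MetricSpace X]

set_option linter.unusedSectionVars false
set_option linter.unusedVariables false

lemma geod_v_eq {f : ℝ → X} {v : ℝ} {a b : X} (h : IsGeodesicFrom f v a b) :
    v = dist a b := by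
  have h0 : (0:ℝ) ∈ Set.Icc (0:ℝ) v := ⟨le_refl _, h.1.1⟩
  have hv : v ∈ Set.Icc (0:ℝ) v := ⟨h.1.1, le_refl _⟩
  have := h.1.2 0 h0 v hv
  rw [h.2.1, h.2.2] at this
  rw [this, abs_sub_comm, abs_of_nonneg (by simpa using h.1.1)]
  simp

lemma geod_rev {f : ℝ → X} {v : ℝ} {a b : X} (h : IsGeodesicFrom f v a b) :
    IsGeodesicFrom (fun x => f (v - x)) v b a := by
  obtain ⟨⟨hv, hiso⟩, h0, h1⟩ := h
  refine ⟨⟨hv, ?_⟩, by simpa using h1, by simpa using h0⟩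
  intro x hx y hy
  have : dist (f (v - x)) (f (v - y)) = |(v - x) - (v - y)| :=
    hiso _ ⟨by linarith [hx.2], by linarith [hx.1]⟩ _ ⟨by linarith [hy.2], by linarith [hy.1]⟩
  rw [this]
  rw [show (v - x) - (v - y) = -(x - y) by ring, abs_neg]

lemma geod_rev_image (f : ℝ → X) {v : ℝ} (hv : 0 ≤ v) :
    (fun x => f (v - x)) '' Set.Icc 0 v = f '' Set.Icc 0 v := by
  ext z
  constructor
  · rintro ⟨x, hx, rfl⟩
    exact ⟨v - x, ⟨by linarith [hx.2], by linarith [hx.1]⟩, rfl⟩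
  · rintro ⟨x, hx, rfl⟩
    exact ⟨v - x, ⟨by linarith [hx.2], by linarith [hx.1]⟩, by simp⟩

lemma geod_continuousOn {f : ℝ → X} {v : ℝ} (h : IsGeodesicOn f v) :
    ContinuousOn f (Set.Icc 0 v) := by
  have hl : LipschitzOnWith 1 f (Set.Icc 0 v) := by
    intro x hx y hy
    rw [edist_dist, edist_dist, h.2 x hx y hy]
    simp [Real.dist_eq, ENNReal.ofReal_le_ofReal_iff, abs_nonneg]
  exact hl.continuousOn

lemma geod_img_compact {f : ℝ → X} {v : ℝ} (h : IsGeodesicOn f v) :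
    IsCompact (f '' Set.Icc 0 v) :=
  isCompact_Icc.image_of_continuousOn (geod_continuousOn h)

lemma geod_img_nonempty {f : ℝ → X} {v : ℝ} (h : IsGeodesicOn f v) :
    (f '' Set.Icc 0 v).Nonempty :=
  ⟨f 0, ⟨0, ⟨le_refl _, h.1⟩, rfl⟩⟩

lemma sq_le_two_pow : ∀ j : ℕ, j ^ 2 ≤ 2 * 2 ^ j := by
  intro j
  induction j with
  | zero => norm_num
  | succ n ih =>
    rcases Nat.lt_or_ge n 3 with h | h
    · interval_cases n <;> norm_num
    · have h1 : (n + 1) ^ 2 ≤ 2 * n ^ 2 := by nlinarith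
      calc (n + 1) ^ 2 ≤ 2 * n ^ 2 := h1
        _ ≤ 2 * (2 * 2 ^ n) := by omega
        _ = 2 * 2 ^ (n + 1) := by ring

/-- Chain-vs-geodesic log lemma. -/
lemma chain_log {δ δ' K : ℝ} (hδ' : 0 ≤ δ') (hδδ' : δ ≤ δ') (hK : 0 ≤ K)
    (hgeo : IsGeodesicSpace X) (hhyp : IsDeltaHyperbolic X δ) :
    ∀ (n : ℕ) (z : ℕ → X) (g : ℝ → X) (v : ℝ),
      (∀ i, i < n → dist (z i) (z (i + 1)) ≤ K) →
      IsGeodesicFrom g v (z 0) (z n) →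
      ∀ m ∈ g '' Set.Icc (0 : ℝ) v,
        ∃ k ≤ n, dist m (z k) ≤ δ' * (Nat.clog 2 n) + K := by
  intro n
  induction n using Nat.strong_induction_on with
  | _ n IH =>
  intro z g v hz hg m hm
  obtain ⟨x, hx, rfl⟩ := hm
  rcases Nat.lt_or_ge n 2 with hn2 | hn2
  · -- n = 0 or 1 : every point of g is within K of z 0
    have hvd : v = dist (z 0) (z n) := by
      have h0 : (0:ℝ) ∈ Set.Icc (0:ℝ) v := ⟨le_refl _, hg.1.1⟩
      have hv : v ∈ Set.Icc (0:ℝ) v := ⟨hg.1.1, le_refl _⟩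
      have := hg.1.2 0 h0 v hv
      rw [hg.2.1, hg.2.2] at this
      rw [this, abs_sub_comm, sub_zero, abs_of_nonneg hg.1.1]
    have hvK : v ≤ K := by
      interval_cases n
      · simp at hvd; rw [hvd]; exact hK
      · rw [hvd]; exact hz 0 (by norm_num)
    have hd : dist (g x) (z 0) ≤ K := by
      rw [← hg.2.1, hg.1.2 x hx 0 ⟨le_refl _, hg.1.1⟩,
        abs_of_nonneg (by linarith [hx.1])]
      linarith [hx.1, hx.2]
    refine ⟨0, Nat.zero_le _, ?_⟩
    have hpos : (0:ℝ) ≤ δ' * (Nat.clog 2 n) := by positivity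
    linarith
  · -- inductive step
    set h : ℕ := (n + 1) / 2 with hh
    have hh1 : 1 ≤ h := by omega
    have hhn : h < n := by omega
    have hclogn : Nat.clog 2 n = Nat.clog 2 h + 1 := by
      have heq := Nat.clog_of_two_le (b := 2) (by norm_num) hn2
      have he2 : (n + 2 - 1) / 2 = h := by omega
      rw [heq, he2]
    obtain ⟨f₁, v₁, hf₁⟩ := hgeo (z h) (z 0)
    obtain ⟨f₃, v₃, hf₃⟩ := hgeo (z h) (z n)
    have hinf := hhyp (z h) (z 0) (z n) f₁ g f₃ v₁ v v₃ hf₁ hg hf₃ x hx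
    have hcpt : IsCompact (f₁ '' Set.Icc 0 v₁ ∪ f₃ '' Set.Icc 0 v₃) :=
      (geod_img_compact hf₁.1).union (geod_img_compact hf₃.1)
    have hne : (f₁ '' Set.Icc 0 v₁ ∪ f₃ '' Set.Icc 0 v₃).Nonempty :=
      (geod_img_nonempty hf₁.1).mono Set.subset_union_left
    obtain ⟨m', hm', hdm'⟩ := hcpt.exists_infDist_eq_dist hne (g x)
    have hdm : dist (g x) m' ≤ δ' := by rw [← hdm']; exact le_trans hinf hδδ'
    rcases hm' with hm1 | hm3
    · have hrev : IsGeodesicFrom (fun y => f₁ (v₁ - y)) v₁ (z 0) (z h) := geod_rev hf₁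
      have hm1' : m' ∈ (fun y => f₁ (v₁ - y)) '' Set.Icc 0 v₁ := by
        rw [geod_rev_image f₁ hf₁.1.1]; exact hm1
      obtain ⟨k, hk, hdk⟩ :=
        IH h hhn z (fun y => f₁ (v₁ - y)) v₁ (fun i hi => hz i (by omega)) hrev m' hm1'
      refine ⟨k, by omega, ?_⟩
      have ht : dist (g x) (z k) ≤ dist (g x) m' + dist m' (z k) := dist_triangle _ _ _
      have hc : (Nat.clog 2 h : ℝ) + 1 ≤ (Nat.clog 2 n : ℝ) := by
        exact_mod_cast Nat.le_of_eq hclogn.symm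
      have h2 : δ' * ((Nat.clog 2 h : ℝ) + 1) ≤ δ' * (Nat.clog 2 n) :=
        mul_le_mul_of_nonneg_left hc hδ'
      linarith
    · set z' : ℕ → X := fun k => z (h + k) with hz'
      have hgf : IsGeodesicFrom f₃ v₃ (z' 0) (z' (n - h)) := by
        have e1 : z' 0 = z h := by simp [hz']
        have e2 : z' (n - h) = z n := by simp only [hz']; congr 1; omega
        rw [e1, e2]; exact hf₃
      obtain ⟨k, hk, hdk⟩ :=
        IH (n - h) (by omega) z' f₃ v₃
          (fun i hi => by
            have := hz (h + i) (by omega)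
            simpa [hz', Nat.add_assoc] using this) hgf m' hm3
      refine ⟨h + k, by omega, ?_⟩
      have ht : dist (g x) (z (h + k)) ≤ dist (g x) m' + dist m' (z' k) := by
        simpa [hz'] using dist_triangle (g x) m' (z' k)
      have hmono : Nat.clog 2 (n - h) ≤ Nat.clog 2 h := Nat.clog_mono_right 2 (by omega)
      have hc : (Nat.clog 2 (n - h) : ℝ) + 1 ≤ (Nat.clog 2 n : ℝ) := by
        exact_mod_cast by omega
      have h2 : δ' * ((Nat.clog 2 (n - h) : ℝ) + 1) ≤ δ' * (Nat.clog 2 n) :=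
        mul_le_mul_of_nonneg_left hc hδ'
      linarith

/-- concatenation of chains -/
def catChain (z₁ : ℕ → X) (n₁ : ℕ) (z₂ : ℕ → X) : ℕ → X :=
  fun i => if i ≤ n₁ then z₁ i else z₂ (i - n₁)

lemma catChain_steps {K : ℝ} {z₁ z₂ : ℕ → X} {n₁ : ℕ}
    (h₁ : ∀ i, dist (z₁ i) (z₁ (i + 1)) ≤ K)
    (h₂ : ∀ i, dist (z₂ i) (z₂ (i + 1)) ≤ K)
    (hjoin : z₁ n₁ = z₂ 0) :
    ∀ i, dist (catChain z₁ n₁ z₂ i) (catChain z₁ n₁ z₂ (i + 1)) ≤ K := by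
  intro i
  unfold catChain
  rcases le_or_gt (i + 1) n₁ with h | h
  · rw [if_pos (by omega), if_pos h]
    exact h₁ i
  rcases le_or_gt i n₁ with h' | h'
  · have : i = n₁ := by omega
    subst this
    rw [if_pos le_rfl, if_neg (by omega), hjoin]
    have : i + 1 - i = 1 := by omega
    rw [this]
    exact h₂ 0
  · rw [if_neg (by omega), if_neg (by omega)]
    have : i + 1 - n₁ = (i - n₁) + 1 := by omega
    rw [this]
    exact h₂ (i - n₁)

lemma catChain_right {z₁ z₂ : ℕ → X} {n₁ : ℕ} (hjoin : z₁ n₁ = z₂ 0) (j : ℕ) :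
    catChain z₁ n₁ z₂ (n₁ + j) = z₂ j := by
  unfold catChain
  rcases Nat.eq_zero_or_pos j with rfl | hj
  · rw [if_pos (by omega)]; simpa using hjoin
  · rw [if_neg (by omega)]
    congr 1
    omega

lemma catChain_zero (z₁ : ℕ → X) (n₁ : ℕ) (z₂ : ℕ → X) :
    catChain z₁ n₁ z₂ 0 = z₁ 0 := by
  unfold catChain; rw [if_pos (Nat.zero_le _)]

lemma catChain_mem (z₁ : ℕ → X) (n₁ : ℕ) (z₂ : ℕ → X) (i : ℕ) :
    catChain z₁ n₁ z₂ i ∈ Set.range z₁ ∪ Set.range z₂ := by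
  unfold catChain
  split_ifs
  · exact Or.inl ⟨i, rfl⟩
  · exact Or.inr ⟨i - n₁, rfl⟩

/-- The Morse stability constant. -/
noncomputable def Rconst (δ lam C : ℝ) : ℝ :=
  (max δ 0) * (2 * (6 * lam + 2) * (max δ 0) +
      2 * (6 * lam + 2) * ((max δ 0) + (lam + C + 1)) + 2 * (lam * (C + 6) + 5)) +
    (max δ 0) + (lam + C + 1)

lemma Rconst_nonneg {δ lam C : ℝ} (hlam : 0 < lam) (hC : 0 < C) : 0 ≤ Rconst δ lam C := by
  unfold Rconst
  have h0 : (0:ℝ) ≤ max δ 0 := le_max_right _ _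
  positivity

lemma qg_numeric {δ' K c₁ c₂ D : ℝ} (n : ℕ) (hδ'0 : 0 ≤ δ') (hK0 : 0 ≤ K)
    (hc₁0 : 0 ≤ c₁) (hc₂0 : 0 ≤ c₂) (hD0 : 0 ≤ D)
    (hnb : (n:ℝ) ≤ c₁ * D + c₂) (hDz : D ≤ δ' * (Nat.clog 2 n) + K) :
    D ≤ δ' * (2*c₁*δ' + 2*c₁*(δ' + K) + 2*c₂) + δ' + K := by
  have hbig0 : 0 ≤ δ' * (2*c₁*δ' + 2*c₁*(δ' + K) + 2*c₂) := by positivity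
  rcases Nat.lt_or_ge n 2 with hsmall | hbig
  · have hcl0 : Nat.clog 2 n = 0 := Nat.clog_of_right_le_one (by omega) 2
    rw [hcl0] at hDz
    push_cast at hDz
    linarith
  · set j : ℕ := Nat.clog 2 n - 1 with hjdef
    have hclpos : 0 < Nat.clog 2 n := Nat.clog_pos (by norm_num) hbig
    have hcl : Nat.clog 2 n = j + 1 := by omega
    have hpow : 2 ^ j < n := by
      have := Nat.pow_pred_clog_lt_self (b := 2) (by norm_num) (by omega : 1 < n)
      simpa [hjdef, Nat.pred_eq_sub_one] using this
    have hj2 : ((j:ℝ))^2 ≤ 2 * (c₁ * D + c₂) := by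
      have h1 : ((j:ℝ))^2 ≤ 2 * ((2:ℝ))^(j:ℕ) := by exact_mod_cast sq_le_two_pow j
      have h2 : ((2:ℝ))^(j:ℕ) ≤ (n:ℝ) := by exact_mod_cast le_of_lt hpow
      linarith
    have hDj : D ≤ δ' * ((j:ℝ)+1) + K := by
      rw [hcl] at hDz; push_cast at hDz; linarith
    rcases Nat.eq_zero_or_pos j with hj0 | hjpos
    · rw [hj0] at hDj
      push_cast at hDj
      linarith
    · have hj1 : (1:ℝ) ≤ (j:ℝ) := by exact_mod_cast hjpos
      have hq : ((j:ℝ))^2 ≤ (2*c₁*δ') * (j:ℝ) + (2*c₁*(δ' + K) + 2*c₂) := by nlinarith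
      have hjab : (j:ℝ) ≤ 2*c₁*δ' + (2*c₁*(δ' + K) + 2*c₂) := by
        by_contra hcon
        push_neg at hcon
        have hjpos' : (0:ℝ) < (j:ℝ) := by linarith
        have hb0 : (0:ℝ) ≤ 2*c₁*(δ' + K) + 2*c₂ := by positivity
        have h1 : (2*c₁*(δ' + K) + 2*c₂) * 1 ≤ (2*c₁*(δ' + K) + 2*c₂) * (j:ℝ) :=
          mul_le_mul_of_nonneg_left hj1 hb0
        have h2 := mul_lt_mul_of_pos_right hcon hjpos'
        have hsq : (j:ℝ) * (j:ℝ) = (j:ℝ)^2 := by ring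
        nlinarith [hq, h1, h2]
      have := mul_le_mul_of_nonneg_left hjab hδ'0
      linarith

set_option maxHeartbeats 2000000 in
/-- Morse lemma, the direction we need: any geodesic joining the endpoints of a
quasigeodesic stays within `Rconst` of the image of the quasigeodesic. -/
lemma geod_near_qg {δ lam C : ℝ} (hlam : 0 < lam) (hC : 0 < C)
    (hgeo : IsGeodesicSpace X) (hhyp : IsDeltaHyperbolic X δ)
    {α : ℝ → X} {u : ℝ} (hα : IsQuasigeodesicOn lam C α u)
    {g : ℝ → X} {ℓ : ℝ} (hg : IsGeodesicFrom g ℓ (α 0) (α u)) :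
    ∀ m ∈ g '' Set.Icc (0:ℝ) ℓ, infDist m (α '' Set.Icc (0:ℝ) u) ≤ Rconst δ lam C := by
  set δ' : ℝ := max δ 0 with hδ'def
  have hδ'0 : 0 ≤ δ' := le_max_right _ _
  have hδδ' : δ ≤ δ' := le_max_left _ _
  set K : ℝ := lam + C + 1 with hKdef
  have hK0 : (0:ℝ) ≤ K := by positivity
  set c₁ : ℝ := 6 * lam + 2 with hc₁def
  set c₂ : ℝ := lam * (C + 6) + 5 with hc₂def
  have hc₁0 : (0:ℝ) ≤ c₁ := by positivity
  have hc₂0 : (0:ℝ) ≤ c₂ := by positivity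
  have hu0 : 0 ≤ u := hα.1
  have hℓ0 : 0 ≤ ℓ := hg.1.1
  set αIm := α '' Set.Icc (0:ℝ) u with hαImdef
  have hαne : αIm.Nonempty := ⟨α 0, 0, ⟨le_refl _, hu0⟩, rfl⟩
  -- maximum of the distance function along the geodesic
  have hcont : ContinuousOn (fun r => infDist (g r) αIm) (Set.Icc 0 ℓ) :=
    (continuous_infDist_pt αIm).comp_continuousOn (geod_continuousOn hg.1)
  obtain ⟨r₀, hr₀, hmax⟩ :=
    isCompact_Icc.exists_isMaxOn (Set.nonempty_Icc.2 hℓ0) hcont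
  set D := infDist (g r₀) αIm with hDdef
  have hD0 : 0 ≤ D := infDist_nonneg
  have hDle : ∀ r ∈ Set.Icc (0:ℝ) ℓ, infDist (g r) αIm ≤ D := fun r hr => hmax hr
  suffices hDR : D ≤ Rconst δ lam C by
    rintro m ⟨r, hr, rfl⟩
    exact le_trans (hDle r hr) hDR
  set m₀ := g r₀ with hm₀def
  have hm₀far : ∀ q ∈ αIm, D ≤ dist m₀ q := fun q hq => infDist_le_dist_of_mem hq
  have hαmem : ∀ t ∈ Set.Icc (0:ℝ) u, α t ∈ αIm := fun t ht => ⟨t, ht, rfl⟩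
  have hαmem' : ∀ y ∈ αIm, ∃ t ∈ Set.Icc (0:ℝ) u, α t = y := fun y hy => hy
  clear_value αIm D
  set sm2 : ℝ := max 0 (r₀ - 2*(D+1)) with hsm2def
  set sp2 : ℝ := min ℓ (r₀ + 2*(D+1)) with hsp2def
  have hsm20 : 0 ≤ sm2 := le_max_left _ _
  have hsm2r : sm2 ≤ r₀ := max_le hr₀.1 (by linarith)
  have hrsp2 : r₀ ≤ sp2 := le_min hr₀.2 (by linarith)
  have hsp2ℓ : sp2 ≤ ℓ := min_le_left _ _
  have hsm2lb : r₀ - 2*(D+1) ≤ sm2 := le_max_right _ _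
  have hsp2ub : sp2 ≤ r₀ + 2*(D+1) := min_le_right _ _
  have hss : sp2 - sm2 ≤ 4*(D+1) := by linarith
  have hdists : dist (g sm2) (g sp2) = sp2 - sm2 := by
    rw [hg.1.2 sm2 ⟨hsm20, le_trans hsm2r hr₀.2⟩ sp2 ⟨le_trans hr₀.1 hrsp2, hsp2ℓ⟩,
      abs_of_nonpos (by linarith)]
    ring
  -- choose tm2
  have hexm2 : ∃ t ∈ Set.Icc (0:ℝ) u, dist (g sm2) (α t) ≤ D + 1 ∧
      (2*(D+1) ≤ dist m₀ (g sm2) ∨ dist (g sm2) (α t) = 0) := by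
    rcases le_or_gt (r₀ - 2*(D+1)) 0 with hcase | hcase
    · have hs0 : sm2 = 0 := by rw [hsm2def]; exact max_eq_left (by linarith)
      refine ⟨0, ⟨le_refl _, hu0⟩, ?_, Or.inr ?_⟩
      · rw [hs0, hg.2.1]; simp only [dist_self]; linarith
      · rw [hs0, hg.2.1]; simp only [dist_self]
    · have hs0 : sm2 = r₀ - 2*(D+1) := by rw [hsm2def]; exact max_eq_right (by linarith)
      have hinf : infDist (g sm2) αIm ≤ D := hDle sm2 ⟨hsm20, le_trans hsm2r hr₀.2⟩
      obtain ⟨y, hy, hdy⟩ := (infDist_lt_iff hαne).1 (show Metric.infDist (g sm2) αIm < D + 1 by linarith)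
      obtain ⟨t, ht, rfl⟩ := hαmem' y hy
      refine ⟨t, ht, le_of_lt hdy, Or.inl ?_⟩
      have hd : dist m₀ (g sm2) = |r₀ - sm2| :=
        hg.1.2 r₀ hr₀ sm2 ⟨hsm20, le_trans hsm2r hr₀.2⟩
      rw [hd, hs0, abs_of_nonneg (by linarith)]
      linarith
  obtain ⟨tm2, htm2, hdtm2, hcasem2⟩ := hexm2
  -- choose tp2
  have hexp2 : ∃ t ∈ Set.Icc (0:ℝ) u, dist (g sp2) (α t) ≤ D + 1 ∧
      (2*(D+1) ≤ dist m₀ (g sp2) ∨ dist (g sp2) (α t) = 0) := by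
    rcases le_or_gt ℓ (r₀ + 2*(D+1)) with hcase | hcase
    · have hs0 : sp2 = ℓ := by rw [hsp2def]; exact min_eq_left (by linarith)
      refine ⟨u, ⟨hu0, le_refl _⟩, ?_, Or.inr ?_⟩
      · rw [hs0, hg.2.2]; simp only [dist_self]; linarith
      · rw [hs0, hg.2.2]; simp only [dist_self]
    · have hs0 : sp2 = r₀ + 2*(D+1) := by rw [hsp2def]; exact min_eq_right (by linarith)
      have hinf : infDist (g sp2) αIm ≤ D := hDle sp2 ⟨le_trans hr₀.1 hrsp2, hsp2ℓ⟩
      obtain ⟨y, hy, hdy⟩ := (infDist_lt_iff hαne).1 (show Metric.infDist (g sp2) αIm < D + 1 by linarith)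
      obtain ⟨t, ht, rfl⟩ := hαmem' y hy
      refine ⟨t, ht, le_of_lt hdy, Or.inl ?_⟩
      have hd : dist m₀ (g sp2) = |r₀ - sp2| :=
        hg.1.2 r₀ hr₀ sp2 ⟨le_trans hr₀.1 hrsp2, hsp2ℓ⟩
      rw [hd, hs0, abs_of_nonpos (by linarith)]
      linarith
  obtain ⟨tp2, htp2, hdtp2, hcasep2⟩ := hexp2
  clear_value sm2 sp2
  -- bridge geodesics
  obtain ⟨γ₁, v₁, hγ₁⟩ := hgeo (g sm2) (α tm2)
  obtain ⟨γ₂, v₂, hγ₂⟩ := hgeo (α tp2) (g sp2)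
  have hv₁ : v₁ = dist (g sm2) (α tm2) := geod_v_eq hγ₁
  have hv₂ : v₂ = dist (α tp2) (g sp2) := geod_v_eq hγ₂
  have hv₁0 : 0 ≤ v₁ := hγ₁.1.1
  have hv₂0 : 0 ≤ v₂ := hγ₂.1.1
  have hv₁D : v₁ ≤ D + 1 := by rw [hv₁]; exact hdtm2
  have hv₂D : v₂ ≤ D + 1 := by rw [hv₂, dist_comm]; exact hdtp2
  set w : ℝ := tp2 - tm2 with hwdef
  set n₁ : ℕ := ⌈v₁⌉₊ with hn₁def
  set n₂ : ℕ := ⌈|w|⌉₊ with hn₂def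
  set n₃ : ℕ := ⌈v₂⌉₊ with hn₃def
  have hwn : |w| ≤ (n₂:ℝ) := hn₂def ▸ Nat.le_ceil _
  have hn₂ceil : (n₂:ℝ) < |w| + 1 := hn₂def ▸ Nat.ceil_lt_add_one (abs_nonneg w)
  have hn₁ceil : v₁ ≤ (n₁:ℝ) := hn₁def ▸ Nat.le_ceil _
  have hn₁ceil' : (n₁:ℝ) < v₁ + 1 := hn₁def ▸ Nat.ceil_lt_add_one hv₁0
  have hn₃ceil : v₂ ≤ (n₃:ℝ) := hn₃def ▸ Nat.le_ceil _
  have hn₃ceil' : (n₃:ℝ) < v₂ + 1 := hn₃def ▸ Nat.ceil_lt_add_one hv₂0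
  have hn₂zero : n₂ = 0 → w = 0 := by
    intro h0
    rw [hn₂def] at h0
    have h1 : |w| ≤ 0 := by simpa using Nat.ceil_eq_zero.1 h0
    have h2 := abs_nonneg w
    exact abs_eq_zero.1 (le_antisymm h1 h2)
  clear_value n₁ n₂ n₃
  set p₁ : ℕ → X := fun i => γ₁ (min (i:ℝ) v₁) with hp₁def
  set p₂ : ℕ → X := fun i => α (tm2 + ((min i n₂ : ℕ) : ℝ) * w / n₂) with hp₂def
  set p₃ : ℕ → X := fun i => γ₂ (min (i:ℝ) v₂) with hp₃def
  -- the interpolation times of p₂ lie in [0, u], and are within [min tm2 tp2, max tm2 tp2]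
  have hτmem : ∀ i : ℕ, (tm2 + ((min i n₂ : ℕ) : ℝ) * w / n₂) ∈ Set.Icc (0:ℝ) u := by
    intro i
    rcases Nat.eq_zero_or_pos n₂ with hn20 | hn2pos
    · simp only [hn20, Nat.cast_zero, div_zero]
      simpa using htm2
    · have hn2R : (0:ℝ) < n₂ := by exact_mod_cast hn2pos
      set j : ℕ := min i n₂ with hjdef
      have hj0 : (0:ℝ) ≤ (j:ℝ) := Nat.cast_nonneg _
      have hjn : (j:ℝ) ≤ (n₂:ℝ) := by exact_mod_cast min_le_right i n₂
      have hθ0 : (0:ℝ) ≤ (j:ℝ) / n₂ := by positivity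
      have hθ1 : (j:ℝ) / n₂ ≤ 1 := by
        rw [div_le_one hn2R]; exact hjn
      have hform : tm2 + (j:ℝ) * w / n₂ = tm2 + ((j:ℝ)/n₂) * w := by ring
      rw [hform]
      have hw' : tm2 + w = tp2 := by rw [hwdef]; ring
      rcases le_total 0 w with hw | hw
      · constructor
        · have h1 := mul_nonneg hθ0 hw
          linarith [htm2.1]
        · have h1 : (j:ℝ)/n₂ * w ≤ 1 * w := mul_le_mul_of_nonneg_right hθ1 hw
          linarith [htp2.2]
      · constructor
        · have h1 : 1 * w ≤ (j:ℝ)/n₂ * w := mul_le_mul_of_nonpos_right hθ1 hw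
          linarith [htp2.1]
        · have h1 := mul_nonpos_of_nonneg_of_nonpos hθ0 hw
          linarith [htm2.2]
  have hp₂mem : ∀ i, p₂ i ∈ αIm := by
    intro i
    simp only [hp₂def]
    exact hαmem _ (hτmem i)
  clear_value p₁ p₂ p₃
  -- steps of p₁
  have hminstep : ∀ (i : ℕ) (v : ℝ), 0 ≤ v →
      min ((i:ℝ)) v ≤ min ((i+1:ℕ):ℝ) v ∧ min ((i+1:ℕ):ℝ) v ≤ min ((i:ℝ)) v + 1 := by
    intro i v hv
    push_cast
    constructor
    · exact min_le_min (by linarith) le_rfl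
    · rcases le_total ((i:ℝ)+1) v with h | h
      · rw [min_eq_left h, min_eq_left (by linarith)]
      · rcases le_total (i:ℝ) v with h' | h'
        · rw [min_eq_right h, min_eq_left h']; linarith
        · rw [min_eq_right h, min_eq_right h']; linarith
  have hminmem : ∀ (i : ℕ) (v : ℝ), 0 ≤ v → min ((i:ℝ)) v ∈ Set.Icc 0 v :=
    fun i v hv => ⟨le_min (Nat.cast_nonneg _) hv, min_le_right _ _⟩
  have hp₁step : ∀ i, dist (p₁ i) (p₁ (i+1)) ≤ K := by
    intro i
    have hmem1 := hminmem i v₁ hv₁0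
    have hmem2 := hminmem (i+1) v₁ hv₁0
    have hst := hminstep i v₁ hv₁0
    have := hγ₁.1.2 _ hmem1 _ hmem2
    simp only [hp₁def]
    rw [this, abs_sub_comm, abs_of_nonneg (by linarith [hst.1])]
    push_cast at hst ⊢
    simp only [hKdef]
    linarith [hst.2]
  have hp₃step : ∀ i, dist (p₃ i) (p₃ (i+1)) ≤ K := by
    intro i
    have hmem1 := hminmem i v₂ hv₂0
    have hmem2 := hminmem (i+1) v₂ hv₂0
    have hst := hminstep i v₂ hv₂0
    have := hγ₂.1.2 _ hmem1 _ hmem2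
    simp only [hp₃def]
    rw [this, abs_sub_comm, abs_of_nonneg (by linarith [hst.1])]
    push_cast at hst ⊢
    simp only [hKdef]
    linarith [hst.2]
  -- steps of p₂
  have hp₂step : ∀ i, dist (p₂ i) (p₂ (i+1)) ≤ K := by
    intro i
    rcases Nat.eq_zero_or_pos n₂ with hn20 | hn2pos
    · simp only [hp₂def, hn20, Nat.cast_zero, div_zero]
      simpa using hK0
    · have hn2R : (0:ℝ) < n₂ := by exact_mod_cast hn2pos
      have hq := (hα.2 _ (hτmem i) _ (hτmem (i+1))).2
      have hjj : ((min i n₂ : ℕ):ℝ) ≤ ((min (i+1) n₂ : ℕ):ℝ) ∧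
          ((min (i+1) n₂ : ℕ):ℝ) ≤ ((min i n₂ : ℕ):ℝ) + 1 := by
        constructor
        · exact_mod_cast (by omega : min i n₂ ≤ min (i+1) n₂)
        · exact_mod_cast (by omega : min (i+1) n₂ ≤ min i n₂ + 1)
      have habs : |(tm2 + ((min i n₂ : ℕ):ℝ) * w / n₂) - (tm2 + ((min (i+1) n₂ : ℕ):ℝ) * w / n₂)|
          ≤ 1 := by
        have he : (tm2 + ((min i n₂ : ℕ):ℝ) * w / n₂) - (tm2 + ((min (i+1) n₂ : ℕ):ℝ) * w / n₂)
            = ((((min i n₂ : ℕ):ℝ) - ((min (i+1) n₂ : ℕ):ℝ)) * w) / (n₂:ℝ) := by ring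
        rw [he, abs_div, abs_of_nonneg (le_of_lt hn2R), div_le_one hn2R, abs_mul]
        have h1 : |(((min i n₂ : ℕ):ℝ) - ((min (i+1) n₂ : ℕ):ℝ))| ≤ 1 := by
          rw [abs_le]; constructor <;> linarith [hjj.1, hjj.2]
        have h2 := mul_le_mul_of_nonneg_right h1 (abs_nonneg w)
        rw [one_mul] at h2
        linarith only [h2, hwn]
      simp only [hp₂def]
      have h2 : lam * |(tm2 + ((min i n₂ : ℕ):ℝ) * w / n₂) - (tm2 + ((min (i+1) n₂ : ℕ):ℝ) * w / n₂)| + C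
          ≤ lam * 1 + C := by
        have := mul_le_mul_of_nonneg_left habs (le_of_lt hlam)
        linarith only [this]
      simp only [hKdef]
      calc dist (α (tm2 + ((min i n₂ : ℕ):ℝ) * w / n₂)) (α (tm2 + ((min (i+1) n₂ : ℕ):ℝ) * w / n₂))
          ≤ lam * |(tm2 + ((min i n₂ : ℕ):ℝ) * w / n₂) - (tm2 + ((min (i+1) n₂ : ℕ):ℝ) * w / n₂)| + C := hq
        _ ≤ lam * 1 + C := h2
        _ ≤ lam + C + 1 := by linarith
  -- endpoints of the pieces
  have hp₁0 : p₁ 0 = g sm2 := by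
    simp only [hp₁def, Nat.cast_zero]
    rw [min_eq_left hv₁0, hγ₁.2.1]
  have hp₁n : p₁ n₁ = α tm2 := by
    simp only [hp₁def]
    rw [min_eq_right hn₁ceil, hγ₁.2.2]
  have hp₂0 : p₂ 0 = α tm2 := by
    simp only [hp₂def, Nat.cast_zero]
    norm_num
  have hp₂n : p₂ n₂ = α tp2 := by
    simp only [hp₂def, min_self]
    rcases Nat.eq_zero_or_pos n₂ with h0 | hpos
    · have hw0 : w = 0 := hn₂zero h0
      have ht : tp2 = tm2 := by simp only [hwdef] at hw0; linarith
      rw [h0, ht]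
      norm_num
    · have hn2R : ((n₂:ℕ):ℝ) ≠ 0 := by
        have : (0:ℝ) < n₂ := by exact_mod_cast hpos
        linarith
      have : (n₂:ℝ) * w / (n₂:ℝ) = w := by field_simp
      rw [this]
      congr 1
      simp only [hwdef]; ring
  have hp₃0 : p₃ 0 = α tp2 := by
    simp only [hp₃def, Nat.cast_zero]
    rw [min_eq_left hv₂0, hγ₂.2.1]
  have hp₃n : p₃ n₃ = g sp2 := by
    simp only [hp₃def]
    rw [min_eq_right hn₃ceil, hγ₂.2.2]
  -- assemble the chain
  set inner : ℕ → X := catChain p₂ n₂ p₃ with hinnerdef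
  have hjoin₂ : p₂ n₂ = p₃ 0 := by rw [hp₂n, hp₃0]
  have hinner_step : ∀ i, dist (inner i) (inner (i+1)) ≤ K :=
    catChain_steps hp₂step hp₃step hjoin₂
  have hjoin₁ : p₁ n₁ = inner 0 := by
    rw [hp₁n, hinnerdef, catChain_zero, hp₂0]
  set z : ℕ → X := catChain p₁ n₁ inner with hzdef
  have hzstep : ∀ i, dist (z i) (z (i+1)) ≤ K :=
    catChain_steps hp₁step hinner_step hjoin₁
  set n : ℕ := n₁ + (n₂ + n₃) with hndef
  have hz0 : z 0 = g sm2 := by rw [hzdef, catChain_zero]; exact hp₁0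
  have hzn : z n = g sp2 := by
    rw [hzdef, hndef, catChain_right hjoin₁ (n₂ + n₃), hinnerdef,
      catChain_right hjoin₂ n₃]
    exact hp₃n
  -- the subsegment of g from sm2 to sp2 is a geodesic joining the chain endpoints
  set g' : ℝ → X := fun r => g (sm2 + r) with hg'def
  have hg' : IsGeodesicFrom g' (sp2 - sm2) (z 0) (z n) := by
    refine ⟨⟨by linarith, ?_⟩, ?_, ?_⟩
    · intro x hx y hy
      have := hg.1.2 (sm2 + x) ⟨by linarith [hx.1], by linarith [hx.2]⟩
        (sm2 + y) ⟨by linarith [hy.1], by linarith [hy.2]⟩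
      simp only [hg'def]
      rw [this]
      congr 1
      ring
    · rw [hz0]; simp only [hg'def, add_zero]
    · rw [hzn]; simp only [hg'def]; congr 1; ring
  have hm₀mem : m₀ ∈ g' '' Set.Icc (0:ℝ) (sp2 - sm2) :=
    ⟨r₀ - sm2, ⟨by linarith, by linarith⟩, by simp only [hg'def]; congr 1; ring⟩
  obtain ⟨k, hk, hdk⟩ := chain_log hδ'0 hδδ' hK0 hgeo hhyp n z g' (sp2 - sm2)
    (fun i _ => hzstep i) hg' m₀ hm₀mem
  -- every chain point is at distance at least D from m₀
  have hfar : ∀ i, D ≤ dist m₀ (z i) := by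
    intro i
    have hmem' : z i ∈ Set.range p₁ ∪ (Set.range p₂ ∪ Set.range p₃) := by
      rw [hzdef]
      rcases catChain_mem p₁ n₁ inner i with h | ⟨j, hj⟩
      · exact Or.inl h
      · rw [← hj]
        exact Or.inr (catChain_mem p₂ n₂ p₃ j)
    rcases hmem' with ⟨j, hj⟩ | (⟨j, hj⟩ | ⟨j, hj⟩)
    · -- on the first bridge
      rcases hcasem2 with h2D | h0
      · have hd1 : dist (p₁ j) (g sm2) ≤ D + 1 := by
          have hiso := hγ₁.1.2 (min (j:ℝ) v₁) (hminmem j v₁ hv₁0) 0 ⟨le_rfl, hv₁0⟩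
          rw [hγ₁.2.1] at hiso
          simp only [hp₁def]
          rw [hiso, sub_zero, abs_of_nonneg (le_min (Nat.cast_nonneg _) hv₁0)]
          calc min (j:ℝ) v₁ ≤ v₁ := min_le_right _ _
            _ ≤ D + 1 := hv₁D
        have htri := dist_triangle m₀ (p₁ j) (g sm2)
        rw [← hj]
        linarith
      · have hv₁eq : v₁ = 0 := by rw [hv₁, h0]
        have hpj : p₁ j = α tm2 := by
          simp only [hp₁def, hv₁eq]
          rw [min_eq_right (Nat.cast_nonneg j)]
          rw [hγ₁.2.1]
          exact dist_eq_zero.1 h0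
        rw [← hj, hpj]
        exact hm₀far _ (hαmem _ htm2)
    · rw [← hj]
      exact hm₀far _ (hp₂mem j)
    · -- on the second bridge
      rcases hcasep2 with h2D | h0
      · have hd1 : dist (p₃ j) (g sp2) ≤ D + 1 := by
          have hiso := hγ₂.1.2 (min (j:ℝ) v₂) (hminmem j v₂ hv₂0) v₂ ⟨hv₂0, le_rfl⟩
          rw [hγ₂.2.2] at hiso
          simp only [hp₃def]
          rw [hiso, abs_of_nonpos (by
            have := min_le_right ((j:ℝ)) v₂
            linarith)]
          have h1 : (0:ℝ) ≤ min ((j:ℝ)) v₂ := le_min (Nat.cast_nonneg _) hv₂0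
          linarith [hv₂D]
        have htri := dist_triangle m₀ (p₃ j) (g sp2)
        rw [← hj]
        linarith
      · have hv₂eq : v₂ = 0 := by rw [hv₂, dist_comm]; exact h0
        have hpj : p₃ j = α tp2 := by
          simp only [hp₃def, hv₂eq]
          rw [min_eq_right (Nat.cast_nonneg j)]
          rw [hγ₂.2.1]
        rw [← hj, hpj]
        exact hm₀far _ (hαmem _ htp2)
  -- bound on the length of the chain
  have hn₂b : (n₂:ℝ) ≤ |w| + 1 := le_of_lt hn₂ceil
  have hn₁b : (n₁:ℝ) ≤ D + 2 := by linarith [hn₁ceil', hv₁D]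
  have hn₃b : (n₃:ℝ) ≤ D + 2 := by linarith [hn₃ceil', hv₂D]
  have hwb : |w| ≤ lam * (6*(D+1) + C) := by
    have hq := (hα.2 tm2 htm2 tp2 htp2).1
    have hdtt : dist (α tm2) (α tp2) ≤ 6*(D+1) := by
      have h1 : dist (α tm2) (α tp2) ≤
          dist (α tm2) (g sm2) + dist (g sm2) (g sp2) + dist (g sp2) (α tp2) :=
        dist_triangle4 _ _ _ _
      rw [hdists, dist_comm (α tm2) (g sm2)] at h1
      linarith
    have habs : |tm2 - tp2| = |w| := by rw [hwdef, abs_sub_comm]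
    rw [habs] at hq
    have hmul := mul_le_mul_of_nonneg_left (by linarith : lam⁻¹ * |w| ≤ 6*(D+1) + C)
      (le_of_lt hlam)
    rw [← mul_assoc, mul_inv_cancel₀ (ne_of_gt hlam), one_mul] at hmul
    exact hmul
  have hnb : ((n : ℕ):ℝ) ≤ c₁ * D + c₂ := by
    have : ((n : ℕ):ℝ) = (n₁:ℝ) + ((n₂:ℝ) + (n₃:ℝ)) := by
      rw [hndef]; push_cast; ring
    rw [this]
    simp only [hc₁def, hc₂def]
    nlinarith only [hn₁b, hn₂b, hn₃b, hwb]
  have hRform : Rconst δ lam C =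
      δ' * (2*c₁*δ' + 2*c₁*(δ' + K) + 2*c₂) + δ' + K := by
    rw [hδ'def, hKdef, hc₁def, hc₂def]
    unfold Rconst
    ring
  -- final numerical estimate
  have hDz : D ≤ δ' * (Nat.clog 2 n) + K := le_trans (hfar k) hdk
  rw [hRform]
  exact qg_numeric n hδ'0 hK0 hc₁0 hc₂0 hD0 hnb hDz

lemma key_path {δ lam C : ℝ} (hlam : 0 < lam) (hC : 0 < C)
    (hgeo : IsGeodesicSpace X) (hhyp : IsDeltaHyperbolic X δ)
    (S T : Set X) (hS : IsQuasigeodesicSubspace lam C S)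
    (hT : IsQuasigeodesicSubspace lam C T)
    {p : X} (hpS : p ∈ S) (hpT : p ∈ T) {a b : X} (ha : a ∈ S) (hb : b ∈ T) :
    ∃ (f : ℝ → X) (v : ℝ),
      IsQuasigeodesicOn (lam + 1) (C + 2 * (max δ 0 + Rconst δ lam C + 1) + 1) f v ∧
      f 0 = a ∧ f v = b ∧ f '' Set.Icc (0:ℝ) v ⊆ S ∪ T := by
  classical
  have hδ'0 : (0:ℝ) ≤ max δ 0 := le_max_right _ _
  have hR0 : 0 ≤ Rconst δ lam C := Rconst_nonneg hlam hC
  set Q : ℝ := max δ 0 + Rconst δ lam C + 1 with hQdef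
  have hQ0 : 0 < Q := by positivity
  obtain ⟨α, u, hα, hα0, hαu, hαim⟩ := hS a ha p hpS
  obtain ⟨β, uβ, hβ, hβ0, hβu, hβim⟩ := hT p hpT b hb
  obtain ⟨f₁, v₁, hf₁⟩ := hgeo p a
  obtain ⟨f₃, v₃, hf₃⟩ := hgeo p b
  obtain ⟨g, v, hg⟩ := hgeo a b
  have hv0 : 0 ≤ v := hg.1.1
  have hnear : ∀ x ∈ Set.Icc (0:ℝ) v, ∃ z ∈ S ∪ T, dist (g x) z ≤ Q := by
    intro x hx
    have hinf := hhyp p a b f₁ g f₃ v₁ v v₃ hf₁ hg hf₃ x hx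
    have hcpt := (geod_img_compact hf₁.1).union (geod_img_compact hf₃.1)
    have hne : (f₁ '' Set.Icc 0 v₁ ∪ f₃ '' Set.Icc 0 v₃).Nonempty :=
      (geod_img_nonempty hf₁.1).mono Set.subset_union_left
    obtain ⟨m', hm', hdm'⟩ := hcpt.exists_infDist_eq_dist hne (g x)
    have hdm : dist (g x) m' ≤ max δ 0 := by
      rw [← hdm']; exact hinf.trans (le_max_left _ _)
    rcases hm' with hm1 | hm3
    · have hrev : IsGeodesicFrom (fun y => f₁ (v₁ - y)) v₁ (α 0) (α u) := by
        rw [hα0, hαu]; exact geod_rev hf₁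
      have hm1' : m' ∈ (fun y => f₁ (v₁ - y)) '' Set.Icc 0 v₁ := by
        rw [geod_rev_image f₁ hf₁.1.1]; exact hm1
      have hRm := geod_near_qg hlam hC hgeo hhyp hα hrev m' hm1'
      have hαne : (α '' Set.Icc (0:ℝ) u).Nonempty := ⟨α 0, 0, ⟨le_refl _, hα.1⟩, rfl⟩
      obtain ⟨z, hz, hdz⟩ := (infDist_lt_iff hαne).1
        (show infDist m' (α '' Set.Icc (0:ℝ) u) < Rconst δ lam C + 1 by linarith)
      refine ⟨z, Or.inl (hαim hz), ?_⟩
      calc dist (g x) z ≤ dist (g x) m' + dist m' z := dist_triangle _ _ _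
        _ ≤ Q := by rw [hQdef]; linarith
    · have hf₃' : IsGeodesicFrom f₃ v₃ (β 0) (β uβ) := by
        rw [hβ0, hβu]; exact hf₃
      have hRm := geod_near_qg hlam hC hgeo hhyp hβ hf₃' m' hm3
      have hβne : (β '' Set.Icc (0:ℝ) uβ).Nonempty := ⟨β 0, 0, ⟨le_refl _, hβ.1⟩, rfl⟩
      obtain ⟨z, hz, hdz⟩ := (infDist_lt_iff hβne).1
        (show infDist m' (β '' Set.Icc (0:ℝ) uβ) < Rconst δ lam C + 1 by linarith)
      refine ⟨z, Or.inr (hβim hz), ?_⟩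
      calc dist (g x) z ≤ dist (g x) m' + dist m' z := dist_triangle _ _ _
        _ ≤ Q := by rw [hQdef]; linarith
  set F : ℝ → X := fun x => if x ≤ 0 then a else if v ≤ x then b else
    if h : ∃ z ∈ S ∪ T, dist (g x) z ≤ Q then h.choose else a with hFdef
  have hFprop : ∀ x ∈ Set.Icc (0:ℝ) v, dist (F x) (g x) ≤ Q ∧ F x ∈ S ∪ T := by
    intro x hx
    by_cases h0 : x ≤ 0
    · have hx0 : x = 0 := le_antisymm h0 hx.1
      subst hx0
      simp only [hFdef, if_pos le_rfl]
      rw [hg.2.1]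
      exact ⟨by simp [le_of_lt hQ0], Or.inl ha⟩
    · by_cases h1 : v ≤ x
      · have hxv : x = v := le_antisymm hx.2 h1
        subst hxv
        simp only [hFdef, if_neg h0, if_pos le_rfl]
        rw [hg.2.2]
        exact ⟨by simp [le_of_lt hQ0], Or.inr hb⟩
      · have hex := hnear x hx
        simp only [hFdef, if_neg h0, if_neg h1, dif_pos hex]
        obtain ⟨hz1, hz2⟩ := hex.choose_spec
        exact ⟨by rw [dist_comm]; exact hz2, hz1⟩
  have hF0 : F 0 = a := by simp only [hFdef, if_pos le_rfl]
  have hFv : F v = b := by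
    rcases le_or_gt v 0 with hv' | hv'
    · have hveq : v = 0 := le_antisymm hv' hv0
      have hab : a = b := by
        have hd := geod_v_eq hg
        rw [hveq] at hd
        exact dist_eq_zero.1 hd.symm
      simp only [hFdef, hveq, if_pos le_rfl]
      exact hab
    · simp only [hFdef, if_neg (not_le.2 hv'), if_pos le_rfl]
  refine ⟨F, v, ⟨hv0, ?_⟩, hF0, hFv, ?_⟩
  · intro x hx y hy
    obtain ⟨hdx, -⟩ := hFprop x hx
    obtain ⟨hdy, -⟩ := hFprop y hy
    have hgd : dist (g x) (g y) = |x - y| := hg.1.2 x hx y hy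
    have hup : dist (F x) (F y) ≤ |x - y| + 2*Q := by
      have h4 := dist_triangle4 (F x) (g x) (g y) (F y)
      rw [hgd] at h4
      rw [dist_comm (g y) (F y)] at h4
      linarith
    have hlow : |x - y| - 2*Q ≤ dist (F x) (F y) := by
      have h4 := dist_triangle4 (g x) (F x) (F y) (g y)
      rw [dist_comm (g x) (F x)] at h4
      rw [hgd] at h4
      linarith
    have habs : 0 ≤ |x - y| := abs_nonneg _
    have hinv : (lam + 1)⁻¹ ≤ 1 := by
      rw [inv_le_one_iff₀]
      right; linarith
    constructor
    · have h1 : (lam + 1)⁻¹ * |x - y| ≤ |x - y| := by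
        nlinarith
      linarith
    · have h1 : |x - y| ≤ (lam + 1) * |x - y| := by nlinarith
      linarith
  · rintro y ⟨x, hx, rfl⟩
    exact (hFprop x hx).2

end

/-- In a δ-hyperbolic geodesic space, for all λ, C > 0 there are λ', C' > 0
such that the union of two intersecting (λ, C)-quasigeodesic subspaces is a
(λ', C')-quasigeodesic subspace. -/
theorem union_of_quasigeodesic_subspaces {X : Type*} [MetricSpace X] (δ : ℝ)
    (hgeo : IsGeodesicSpace X) (hhyp : IsDeltaHyperbolic X δ) :
    ∀ lam C : ℝ, 0 < lam → 0 < C → ∃ lam' C' : ℝ, 0 < lam' ∧ 0 < C' ∧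
      ∀ A B : Set X, IsQuasigeodesicSubspace lam C A → IsQuasigeodesicSubspace lam C B →
        (A ∩ B).Nonempty → IsQuasigeodesicSubspace lam' C' (A ∪ B) := by
  intro lam C hlam hC
  have hδ'0 : (0:ℝ) ≤ max δ 0 := le_max_right _ _
  have hR0 : 0 ≤ Rconst δ lam C := Rconst_nonneg hlam hC
  refine ⟨lam + 1, C + 2 * (max δ 0 + Rconst δ lam C + 1) + 1, by linarith, by linarith, ?_⟩
  rintro A B hA hB ⟨p, hpA, hpB⟩
  intro a ha b hb
  have hsub : ∀ S T : Set X, S ⊆ A ∪ B → T ⊆ A ∪ B →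
      IsQuasigeodesicSubspace lam C S → IsQuasigeodesicSubspace lam C T →
      p ∈ S → p ∈ T → a ∈ S → b ∈ T →
      ∃ (f : ℝ → X) (v : ℝ),
        IsQuasigeodesicOn (lam + 1) (C + 2 * (max δ 0 + Rconst δ lam C + 1) + 1) f v ∧
        f 0 = a ∧ f v = b ∧ f '' Set.Icc (0:ℝ) v ⊆ A ∪ B := by
    intro S T hSsub hTsub hS hT hpS hpT haS hbT
    obtain ⟨f, v, h1, h2, h3, h4⟩ := key_path hlam hC hgeo hhyp S T hS hT hpS hpT haS hbT
    exact ⟨f, v, h1, h2, h3, h4.trans (Set.union_subset hSsub hTsub)⟩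
  rcases ha with haA | haB <;> rcases hb with hbA | hbB
  · exact hsub A A Set.subset_union_left Set.subset_union_left hA hA hpA hpA haA hbA
  · exact hsub A B Set.subset_union_left Set.subset_union_right hA hB hpA hpB haA hbB
  · exact hsub B A Set.subset_union_right Set.subset_union_left hB hA hpB hpA haB hbA
  · exact hsub B B Set.subset_union_right Set.subset_union_right hB hB hpB hpB haB hbB
end

section
/- Let X be a geodesic metric space and suppose there exist λ > 0 and C > 0 such that every subset of X which is a connected union of (the images of) four geodesic segments is a (λ, C)-quasigeodesic subspace of X. Then X is δ-hyperbolic with δ = λ²(2C + 1) + C + 1. -/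
lemma IsGeodesicOn.isConnected_image {X : Type*} [MetricSpace X] {f : ℝ → X} {v : ℝ}
    (h : IsGeodesicOn f v) : IsConnected (f '' Set.Icc 0 v) := by
  refine (isConnected_Icc h.1).image f ?_
  refine LipschitzOnWith.continuousOn (K := 1) ?_
  intro x hx y hy
  rw [edist_dist, edist_dist, h.2 x hx y hy]
  simp [Real.dist_eq]


/-- If there are λ, C > 0 such that every connected union of four geodesic
segments in a geodesic metric space X is a (λ, C)-quasigeodesic subspace, then X is
δ-hyperbolic with δ = λ²(2C + 1) + C + 1. -/
theorem hyperbolic_of_four_segment_unions {X : Type*} [MetricSpace X]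
    (hgeo : IsGeodesicSpace X) (lam C : ℝ) (hlam : 0 < lam) (hC : 0 < C)
    (h : ∀ Y : Set X,
      (∃ S₁ S₂ S₃ S₄ : Set X, IsGeodesicSegment S₁ ∧ IsGeodesicSegment S₂ ∧
        IsGeodesicSegment S₃ ∧ IsGeodesicSegment S₄ ∧
        Y = S₁ ∪ S₂ ∪ S₃ ∪ S₄ ∧ IsConnected Y) →
      IsQuasigeodesicSubspace lam C Y) :
    IsDeltaHyperbolic X (lam ^ 2 * (2 * C + 1) + C + 1) := by
  intro a b c f₁ f₂ f₃ v₁ v₂ v₃ h₁ h₂ h₃ x hx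
  obtain ⟨H₁, ha₁, hb₁⟩ := h₁
  obtain ⟨H₂, hb₂, hc₂⟩ := h₂
  obtain ⟨H₃, ha₃, hc₃⟩ := h₃
  have hx0 : (0:ℝ) ≤ x := hx.1
  have hxv : x ≤ v₂ := hx.2
  have hδ0 : (0:ℝ) ≤ lam ^ 2 * (2 * C + 1) := by positivity
  by_cases hcase : v₂ < x + (C + 1/2)
  · -- p is close to c
    have hcA : c ∈ f₁ '' Set.Icc (0:ℝ) v₁ ∪ f₃ '' Set.Icc (0:ℝ) v₃ :=
      Or.inr ⟨v₃, ⟨H₃.1, le_refl _⟩, hc₃⟩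
    have habs : |x - v₂| = v₂ - x := by
      rw [abs_of_nonpos (by linarith)]; ring
    have hd : dist (f₂ x) c = v₂ - x := by
      rw [← hc₂, H₂.2 x hx v₂ ⟨H₂.1, le_refl _⟩, habs]
    calc Metric.infDist (f₂ x) _ ≤ dist (f₂ x) c := Metric.infDist_le_dist_of_mem hcA
      _ ≤ lam ^ 2 * (2*C+1) + C + 1 := by rw [hd]; linarith
  · push_neg at hcase
    -- q' = f₂ (x + (C + 1/2)) exists on the side [b,c]
    set r : ℝ := C + 1/2 with hr
    have hr0 : 0 < r := by simp [hr]; linarith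
    set S₁ : Set X := f₁ '' Set.Icc (0:ℝ) v₁ with hS₁
    set S₂ : Set X := f₃ '' Set.Icc (0:ℝ) v₃ with hS₂
    set S₃ : Set X := f₂ '' Set.Icc (0:ℝ) x with hS₃
    set S₄ : Set X := (fun t => f₂ (x + r + t)) '' Set.Icc (0:ℝ) (v₂ - (x + r)) with hS₄
    have H₃' : IsGeodesicOn f₂ x :=
      ⟨hx0, fun u hu w hw => H₂.2 u ⟨hu.1, hu.2.trans hxv⟩ w ⟨hw.1, hw.2.trans hxv⟩⟩
    have H₄' : IsGeodesicOn (fun t => f₂ (x + r + t)) (v₂ - (x + r)) := by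
      constructor
      · linarith
      · intro u hu w hw
        have hu' : x + r + u ∈ Set.Icc (0:ℝ) v₂ :=
          ⟨by simp [hr]; linarith [hu.1], by linarith [hu.2]⟩
        have hw' : x + r + w ∈ Set.Icc (0:ℝ) v₂ :=
          ⟨by simp [hr]; linarith [hw.1], by linarith [hw.2]⟩
        simp only
        rw [H₂.2 _ hu' _ hw', show (x + r + u) - (x + r + w) = u - w by ring]
    have seg₁ : IsGeodesicSegment S₁ := ⟨f₁, v₁, H₁, rfl⟩
    have seg₂ : IsGeodesicSegment S₂ := ⟨f₃, v₃, H₃, rfl⟩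
    have seg₃ : IsGeodesicSegment S₃ := ⟨f₂, x, H₃', rfl⟩
    have seg₄ : IsGeodesicSegment S₄ := ⟨_, _, H₄', rfl⟩
    -- connectedness
    have hbS₃ : b ∈ S₃ := ⟨0, ⟨le_refl _, hx0⟩, hb₂⟩
    have hbS₁ : b ∈ S₁ := ⟨v₁, ⟨H₁.1, le_refl _⟩, hb₁⟩
    have haS₁ : a ∈ S₁ := ⟨0, ⟨le_refl _, H₁.1⟩, ha₁⟩
    have haS₂ : a ∈ S₂ := ⟨0, ⟨le_refl _, H₃.1⟩, ha₃⟩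
    have hcS₂ : c ∈ S₂ := ⟨v₃, ⟨H₃.1, le_refl _⟩, hc₃⟩
    have hcS₄ : c ∈ S₄ := by
      refine ⟨v₂ - (x + r), ⟨by linarith, le_refl _⟩, ?_⟩
      show f₂ (x + r + (v₂ - (x + r))) = c
      rw [show x + r + (v₂ - (x + r)) = v₂ by ring]; exact hc₂
    have hconn : IsConnected (S₁ ∪ S₂ ∪ S₃ ∪ S₄) := by
      have e : S₁ ∪ S₂ ∪ S₃ ∪ S₄ = ((S₃ ∪ S₁) ∪ S₂) ∪ S₄ := by
        ext z; simp only [Set.mem_union]; tauto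
      rw [e]
      refine IsConnected.union ⟨c, Or.inr hcS₂, hcS₄⟩ ?_ H₄'.isConnected_image
      refine IsConnected.union ⟨a, Or.inr haS₁, haS₂⟩ ?_ H₃.isConnected_image
      exact IsConnected.union ⟨b, hbS₃, hbS₁⟩ H₃'.isConnected_image H₁.isConnected_image
    have hq := h (S₁ ∪ S₂ ∪ S₃ ∪ S₄) ⟨S₁, S₂, S₃, S₄, seg₁, seg₂, seg₃, seg₄, rfl, hconn⟩
    have hpY : f₂ x ∈ S₁ ∪ S₂ ∪ S₃ ∪ S₄ :=
      Or.inl (Or.inr ⟨x, ⟨hx0, le_refl _⟩, rfl⟩)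
    have hqY : f₂ (x + r) ∈ S₁ ∪ S₂ ∪ S₃ ∪ S₄ := by
      refine Or.inr ⟨0, ⟨le_refl _, by linarith⟩, ?_⟩
      simp
    obtain ⟨g, v, ⟨hv0, hqg⟩, hg0, hgv, himg⟩ := hq _ hpY _ hqY
    have hxr : x + r ∈ Set.Icc (0:ℝ) v₂ := ⟨by linarith, by linarith⟩
    have hdpq : dist (f₂ x) (f₂ (x + r)) = r := by
      rw [H₂.2 x hx _ hxr, show x - (x + r) = -r by ring, abs_neg, abs_of_pos hr0]
    have hvle : v ≤ lam * (2 * C + 1/2) := by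
      have := (hqg 0 ⟨le_refl _, hv0⟩ v ⟨hv0, le_refl _⟩).1
      rw [hg0, hgv, hdpq, show (0:ℝ) - v = -v by ring, abs_neg, abs_of_nonneg hv0] at this
      have h2 : lam⁻¹ * v ≤ 2 * C + 1/2 := by simp [hr] at this ⊢; linarith
      calc v = lam * (lam⁻¹ * v) := by field_simp
        _ ≤ lam * (2 * C + 1/2) := by nlinarith
    by_cases hA : ∃ t ∈ Set.Icc (0:ℝ) v, g t ∈ S₁ ∪ S₂
    · obtain ⟨t, ht, htA⟩ := hA
      have hub := (hqg 0 ⟨le_refl _, hv0⟩ t ht).2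
      rw [hg0, show (0:ℝ) - t = -t by ring, abs_neg, abs_of_nonneg ht.1] at hub
      calc Metric.infDist (f₂ x) (S₁ ∪ S₂) ≤ dist (f₂ x) (g t) :=
            Metric.infDist_le_dist_of_mem htA
        _ ≤ lam * t + C := hub
        _ ≤ lam ^ 2 * (2 * C + 1) + C + 1 := by nlinarith [ht.2, ht.1]
    · exfalso
      push_neg at hA
      have hmem : ∀ t ∈ Set.Icc (0:ℝ) v, g t ∈ S₃ ∪ S₄ := by
        intro t ht
        have := himg ⟨t, ht, rfl⟩
        rcases this with (h12 | h3) | h4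
        · exact absurd h12 (by simpa using fun hh => hA t ht hh)
        · exact Or.inl h3
        · exact Or.inr h4
      set S : Set ℝ := {t | t ∈ Set.Icc (0:ℝ) v ∧ g t ∈ S₃} with hSdef
      have h0S : 0 ∈ S := by
        refine ⟨⟨le_refl _, hv0⟩, ?_⟩
        rw [hg0]; exact ⟨x, ⟨hx0, le_refl _⟩, rfl⟩
      have hbdd : BddAbove S := ⟨v, fun t ht => ht.1.2⟩
      set T : ℝ := sSup S with hT
      have hT0 : 0 ≤ T := le_csSup hbdd h0S
      have hTv : T ≤ v := csSup_le ⟨0, h0S⟩ fun t ht => ht.1.2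
      set ε : ℝ := 1 / (8 * lam) with hε
      have hε0 : 0 < ε := by positivity
      obtain ⟨t, htS, htT⟩ := exists_lt_of_lt_csSup ⟨0, h0S⟩ (show T - ε < T by linarith)
      have htle : t ≤ T := le_csSup hbdd htS
      set t' : ℝ := min (T + ε) v with ht'
      have ht'v : t' ≤ v := min_le_right _ _
      have ht'0 : 0 ≤ t' := le_min (by linarith) hv0
      have hq'notS₃ : f₂ (x + r) ∉ S₃ := by
        rintro ⟨s, hs, hfs⟩
        have := H₂.2 s ⟨hs.1, hs.2.trans hxv⟩ _ hxr
        rw [hfs, dist_self] at this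
        have habs : |s - (x + r)| = x + r - s := by
          rw [abs_of_nonpos (by linarith [hs.2])]; ring
        rw [habs] at this
        linarith [hs.2]
      have h4 : g t' ∈ S₄ := by
        rcases hmem t' ⟨ht'0, ht'v⟩ with h3 | h4
        · exfalso
          have ht'S : t' ∈ S := ⟨⟨ht'0, ht'v⟩, h3⟩
          have ht'T : t' ≤ T := le_csSup hbdd ht'S
          have hvT : v ≤ T := by
            by_contra hvT
            push_neg at hvT
            have : T < t' := lt_min (by linarith) hvT
            linarith
          have hTv' : t' = v := le_antisymm ht'v (by
            rw [ht']; exact le_min (by linarith) (le_refl _))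
          rw [hTv', hgv] at h3
          exact hq'notS₃ h3
        · exact h4
      obtain ⟨s, hs, hfs⟩ := htS.2
      obtain ⟨u, hu, hfu⟩ := h4
      have hd : dist (g t) (g t') = (x + r + u) - s := by
        rw [← hfs, ← hfu]
        have hs' : s ∈ Set.Icc (0:ℝ) v₂ := ⟨hs.1, hs.2.trans hxv⟩
        have hu' : x + r + u ∈ Set.Icc (0:ℝ) v₂ :=
          ⟨by linarith [hu.1, hr0], by linarith [hu.2]⟩
        rw [H₂.2 s hs' _ hu', abs_of_nonpos (by linarith [hs.2, hu.1])]
        ring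
      have hub := (hqg t htS.1 t' ⟨ht'0, ht'v⟩).2
      have htt' : |t - t'| ≤ 2 * ε := by
        have h1 : t ≤ t' := le_min (by linarith) (htS.1.2)
        have h2 : t' ≤ T + ε := min_le_left _ _
        rw [abs_of_nonpos (by linarith)]
        linarith
      have hlam2 : lam * |t - t'| ≤ 1/4 := by
        have : lam * |t - t'| ≤ lam * (2 * ε) := by nlinarith [abs_nonneg (t - t')]
        have he : lam * (2 * ε) = 1/4 := by
          rw [hε]; field_simp; ring
        linarith
      have hdge : C + 1/2 ≤ dist (g t) (g t') := by
        rw [hd, hr]; linarith [hs.2, hu.1]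
      linarith
end

section
/- Let X be a geodesic metric space such that for every λ, C > 0 there exist λ', C' > 0 with the property that whenever A and B are (λ, C)-quasigeodesic subspaces of X with A ∩ B ≠ ∅, the union A ∪ B is a (λ', C')-quasigeodesic subspace. Then X is δ-hyperbolic for some δ ≥ 0. -/
/-- Monotonicity of being a quasigeodesic subspace in the constants. -/
lemma IsQuasigeodesicSubspace.mono {X : Type*} [MetricSpace X] {lam C lam' C' : ℝ}
    {A : Set X} (h : IsQuasigeodesicSubspace lam C A) (hlam : 0 < lam)
    (h1 : lam ≤ lam') (h2 : C ≤ C') : IsQuasigeodesicSubspace lam' C' A := by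
  intro a ha b hb
  obtain ⟨f, v, ⟨hv, hf⟩, h0, hvb, him⟩ := h a ha b hb
  refine ⟨f, v, ⟨hv, ?_⟩, h0, hvb, him⟩
  intro x hx y hy
  obtain ⟨hlow, hup⟩ := hf x hx y hy
  have habs : (0:ℝ) ≤ |x - y| := abs_nonneg _
  have hinv : lam'⁻¹ ≤ lam⁻¹ := by
    apply inv_anti₀ hlam h1
  constructor
  · have : lam'⁻¹ * |x - y| ≤ lam⁻¹ * |x - y| :=
      mul_le_mul_of_nonneg_right hinv habs
    linarith
  · have : lam * |x - y| ≤ lam' * |x - y| :=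
      mul_le_mul_of_nonneg_right h1 habs
    linarith

/-- A subsegment of a geodesic is a `(Λ, K)`-quasigeodesic subspace for any `Λ ≥ 1, K > 0`. -/
lemma geodesic_subsegment_qgs {X : Type*} [MetricSpace X] {f : ℝ → X} {v : ℝ}
    (hf : IsGeodesicOn f v) {s t Λ K : ℝ} (hs : 0 ≤ s) (htv : t ≤ v)
    (hΛ : 1 ≤ Λ) (hK : 0 < K) :
    IsQuasigeodesicSubspace Λ K (f '' Set.Icc s t) := by
  have key : ∀ σa ∈ Set.Icc s t, ∀ σb ∈ Set.Icc s t, σa ≤ σb →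
      ∃ (g : ℝ → X) (w : ℝ), IsQuasigeodesicOn Λ K g w ∧ g 0 = f σa ∧ g w = f σb ∧
        g '' Set.Icc (0:ℝ) w ⊆ f '' Set.Icc s t := by
    intro σa ha σb hb hab
    have hsub : ∀ u ∈ Set.Icc (0:ℝ) (σb - σa), σa + u ∈ Set.Icc s t := by
      intro u hu
      exact ⟨le_trans ha.1 (by linarith [hu.1]), by linarith [hu.2, hb.2]⟩
    have hsub' : ∀ u ∈ Set.Icc (0:ℝ) (σb - σa), σa + u ∈ Set.Icc (0:ℝ) v := by
      intro u hu
      have := hsub u hu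
      exact ⟨le_trans hs this.1, le_trans this.2 htv⟩
    refine ⟨fun u => f (σa + u), σb - σa, ⟨by linarith, ?_⟩, by simp, by ring_nf, ?_⟩
    · intro x hx y hy
      have hd : dist (f (σa + x)) (f (σa + y)) = |x - y| := by
        rw [hf.2 _ (hsub' x hx) _ (hsub' y hy)]
        congr 1; ring
      rw [hd]
      have habs : (0:ℝ) ≤ |x - y| := abs_nonneg _
      have hinv : Λ⁻¹ ≤ 1 := inv_le_one_of_one_le₀ hΛ
      constructor
      · have : Λ⁻¹ * |x - y| ≤ 1 * |x - y| := mul_le_mul_of_nonneg_right hinv habs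
        linarith
      · have : 1 * |x - y| ≤ Λ * |x - y| := mul_le_mul_of_nonneg_right hΛ habs
        linarith
    · rintro z ⟨u, hu, rfl⟩
      exact ⟨σa + u, hsub u hu, rfl⟩
  rintro z ⟨σa, ha, rfl⟩ w ⟨σb, hb, rfl⟩
  rcases le_total σa σb with hab | hab
  · exact key σa ha σb hb hab
  · obtain ⟨g, wlen, hg, h0, hw, him⟩ := key σb hb σa ha hab
    refine ⟨fun u => g (wlen - u), wlen, ⟨hg.1, ?_⟩, by simpa using hw, by simpa using h0, ?_⟩
    · intro x hx y hy
      have hx' : wlen - x ∈ Set.Icc (0:ℝ) wlen := ⟨by linarith [hx.2], by linarith [hx.1]⟩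
      have hy' : wlen - y ∈ Set.Icc (0:ℝ) wlen := ⟨by linarith [hy.2], by linarith [hy.1]⟩
      have := hg.2 _ hx' _ hy'
      have habs : |wlen - x - (wlen - y)| = |x - y| := by
        rw [show wlen - x - (wlen - y) = -(x - y) by ring, abs_neg]
      rwa [habs] at this
    · rintro z ⟨u, hu, rfl⟩
      exact him ⟨wlen - u, ⟨by linarith [hu.2], by linarith [hu.1]⟩, rfl⟩

/-- If in a geodesic metric space, for all λ, C > 0 there are λ', C' > 0 such
that unions of intersecting (λ, C)-quasigeodesic subspaces are (λ', C')-quasigeodesic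
subspaces, then the space is δ-hyperbolic for some δ ≥ 0. -/
theorem hyperbolic_of_union_of_quasigeodesic_subspaces {X : Type*} [MetricSpace X]
    (hgeo : IsGeodesicSpace X)
    (h : ∀ lam C : ℝ, 0 < lam → 0 < C → ∃ lam' C' : ℝ, 0 < lam' ∧ 0 < C' ∧
      ∀ A B : Set X, IsQuasigeodesicSubspace lam C A → IsQuasigeodesicSubspace lam C B →
        (A ∩ B).Nonempty → IsQuasigeodesicSubspace lam' C' (A ∪ B)) :
    ∃ δ : ℝ, 0 ≤ δ ∧ IsDeltaHyperbolic X δ := by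
  -- Fix the constants once and for all, by three nested applications of `h`.
  obtain ⟨l₁, c₁, hl₁, hc₁, h1⟩ := h 1 1 one_pos one_pos
  set Λ₁ : ℝ := max l₁ 1 with hΛ₁def
  set K₁ : ℝ := max c₁ 1 with hK₁def
  have hΛ₁pos : (0:ℝ) < Λ₁ := lt_of_lt_of_le one_pos (le_max_right _ _)
  have hK₁pos : (0:ℝ) < K₁ := lt_of_lt_of_le one_pos (le_max_right _ _)
  have hΛ₁one : (1:ℝ) ≤ Λ₁ := le_max_right _ _
  obtain ⟨l₂, c₂, hl₂, hc₂, h2⟩ := h Λ₁ K₁ hΛ₁pos hK₁pos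
  set Λ₂ : ℝ := max l₂ 1 with hΛ₂def
  set K₂ : ℝ := max c₂ 1 with hK₂def
  have hΛ₂pos : (0:ℝ) < Λ₂ := lt_of_lt_of_le one_pos (le_max_right _ _)
  have hK₂pos : (0:ℝ) < K₂ := lt_of_lt_of_le one_pos (le_max_right _ _)
  have hΛ₂one : (1:ℝ) ≤ Λ₂ := le_max_right _ _
  obtain ⟨lam, C, hlam, hC, h3⟩ := h Λ₂ K₂ hΛ₂pos hK₂pos
  -- Numeric constants for the moat argument.
  set J : ℝ := 3 * lam + C with hJdef
  set H : ℝ := J + 1 with hHdef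
  set R : ℝ := lam * (lam * (H + 1 + C)) + C with hRdef
  set δ : ℝ := R + J + 3 * H + 10 with hδdef
  have hJpos : 0 < J := by positivity
  have hHpos : 0 < H := by positivity
  have hRpos : 0 < R := by positivity
  have hδpos : 0 < δ := by positivity
  have hHδ : H < δ := by
    have : 0 < R + J + 2 * H + 10 := by positivity
    simp only [hδdef]; linarith
  refine ⟨δ, le_of_lt hδpos, ?_⟩
  intro a b c f₁ f₂ f₃ v₁ v₂ v₃ hg1 hg2 hg3 x hx
  by_contra hcon
  push_neg at hcon
  set U : Set X := f₁ '' Set.Icc (0:ℝ) v₁ ∪ f₃ '' Set.Icc (0:ℝ) v₃ with hUdef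
  -- Basic membership facts.
  have haU₁ : a ∈ f₁ '' Set.Icc (0:ℝ) v₁ := ⟨0, ⟨le_refl _, hg1.1.1⟩, hg1.2.1⟩
  have haU₃ : a ∈ f₃ '' Set.Icc (0:ℝ) v₃ := ⟨0, ⟨le_refl _, hg3.1.1⟩, hg3.2.1⟩
  have hbU : b ∈ U := Or.inl ⟨v₁, ⟨hg1.1.1, le_refl _⟩, hg1.2.2⟩
  have hcU : c ∈ U := Or.inr ⟨v₃, ⟨hg3.1.1, le_refl _⟩, hg3.2.2⟩
  have hUne : U.Nonempty := ⟨b, hbU⟩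
  -- U is a (Λ₁, K₁)-quasigeodesic subspace.
  have hU : IsQuasigeodesicSubspace Λ₁ K₁ U := by
    have hs₁ : IsQuasigeodesicSubspace 1 1 (f₁ '' Set.Icc (0:ℝ) v₁) :=
      geodesic_subsegment_qgs hg1.1 (le_refl 0) (le_refl v₁) (le_refl 1) one_pos
    have hs₃ : IsQuasigeodesicSubspace 1 1 (f₃ '' Set.Icc (0:ℝ) v₃) :=
      geodesic_subsegment_qgs hg3.1 (le_refl 0) (le_refl v₃) (le_refl 1) one_pos
    exact (h1 _ _ hs₁ hs₃ ⟨a, haU₁, haU₃⟩).mono hl₁ (le_max_left _ _) (le_max_left _ _)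
  -- Distance function along the side [b, c].
  have hDlip : ∀ s ∈ Set.Icc (0:ℝ) v₂, ∀ t ∈ Set.Icc (0:ℝ) v₂,
      Metric.infDist (f₂ s) U ≤ Metric.infDist (f₂ t) U + |s - t| := by
    intro s hs t ht
    have := Metric.infDist_le_infDist_add_dist (x := f₂ s) (y := f₂ t) (s := U)
    rwa [hg2.1.2 s hs t ht] at this
  have hD0 : Metric.infDist (f₂ 0) U = 0 := by
    rw [hg2.2.1]; exact Metric.infDist_zero_of_mem hbU
  have hDv₂ : Metric.infDist (f₂ v₂) U = 0 := by
    rw [hg2.2.2]; exact Metric.infDist_zero_of_mem hcU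
  have hDx : δ < Metric.infDist (f₂ x) U := hcon
  have hxmem : x ∈ Set.Icc (0:ℝ) v₂ := hx
  have h0v₂ : (0:ℝ) ∈ Set.Icc (0:ℝ) v₂ := ⟨le_refl _, hg2.1.1⟩
  have hv₂v₂ : v₂ ∈ Set.Icc (0:ℝ) v₂ := ⟨hg2.1.1, le_refl _⟩
  -- Left moat boundary.
  set Sl : Set ℝ := {σ | σ ∈ Set.Icc (0:ℝ) x ∧ Metric.infDist (f₂ σ) U ≤ H} with hSldef
  have h0Sl : (0:ℝ) ∈ Sl := ⟨⟨le_refl _, hx.1⟩, by rw [hD0]; linarith⟩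
  have hSlne : Sl.Nonempty := ⟨0, h0Sl⟩
  have hSlbdd : BddAbove Sl := ⟨x, fun σ hσ => hσ.1.2⟩
  set σl : ℝ := sSup Sl with hσldef
  have hσl0 : 0 ≤ σl := le_csSup hSlbdd h0Sl
  have hσlx : σl ≤ x := csSup_le hSlne (fun σ hσ => hσ.1.2)
  have hσlv₂ : σl ∈ Set.Icc (0:ℝ) v₂ := ⟨hσl0, le_trans hσlx hx.2⟩
  have hmemIccl : ∀ σ ∈ Sl, σ ∈ Set.Icc (0:ℝ) v₂ :=
    fun σ hσ => ⟨hσ.1.1, le_trans hσ.1.2 hx.2⟩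
  have hDσl_le : Metric.infDist (f₂ σl) U ≤ H := by
    refine le_of_forall_pos_le_add ?_
    intro ε hε
    obtain ⟨σ, hσSl, hσgt⟩ := exists_lt_of_lt_csSup hSlne (by linarith : σl - ε < sSup Sl)
    have hσle : σ ≤ σl := le_csSup hSlbdd hσSl
    have := hDlip σl hσlv₂ σ (hmemIccl σ hσSl)
    have habs : |σl - σ| ≤ ε := by rw [abs_of_nonneg (by linarith)]; linarith
    linarith [hσSl.2]
  have hσllt : σl < x := by
    rcases lt_or_eq_of_le hσlx with h' | h'
    · exact h'
    · exfalso; rw [h'] at hDσl_le; linarith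
  have hDleft : ∀ σ, σl < σ → σ ≤ x → H < Metric.infDist (f₂ σ) U := by
    intro σ hσgt hσle
    by_contra hcon2
    push_neg at hcon2
    have : σ ∈ Sl := ⟨⟨le_trans hσl0 (le_of_lt hσgt), hσle⟩, hcon2⟩
    exact absurd (le_csSup hSlbdd this) (not_le_of_gt hσgt)
  have hDσl_ge : H ≤ Metric.infDist (f₂ σl) U := by
    by_contra hcon2
    push_neg at hcon2
    set ε : ℝ := min ((H - Metric.infDist (f₂ σl) U) / 2) ((x - σl) / 2) with hεdef
    have hεpos : 0 < ε := lt_min (by linarith) (by linarith)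
    have hσ' : σl + ε ≤ x := by
      have : ε ≤ (x - σl) / 2 := min_le_right _ _
      linarith
    have hlt : H < Metric.infDist (f₂ (σl + ε)) U := hDleft _ (by linarith) hσ'
    have hmem' : σl + ε ∈ Set.Icc (0:ℝ) v₂ := ⟨by linarith, le_trans hσ' hx.2⟩
    have := hDlip (σl + ε) hmem' σl hσlv₂
    have habs : |σl + ε - σl| = ε := by rw [show σl + ε - σl = ε by ring, abs_of_pos hεpos]
    rw [habs] at this
    have hε2 : ε ≤ (H - Metric.infDist (f₂ σl) U) / 2 := min_le_left _ _
    linarith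
  -- Right moat boundary.
  set Sr : Set ℝ := {σ | σ ∈ Set.Icc x v₂ ∧ Metric.infDist (f₂ σ) U ≤ H} with hSrdef
  have hv₂Sr : v₂ ∈ Sr := ⟨⟨hx.2, le_refl _⟩, by rw [hDv₂]; linarith⟩
  have hSrne : Sr.Nonempty := ⟨v₂, hv₂Sr⟩
  have hSrbdd : BddBelow Sr := ⟨x, fun σ hσ => hσ.1.1⟩
  set σr : ℝ := sInf Sr with hσrdef
  have hσrx : x ≤ σr := le_csInf hSrne (fun σ hσ => hσ.1.1)
  have hσrv₂ : σr ≤ v₂ := csInf_le hSrbdd hv₂Sr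
  have hσrmem : σr ∈ Set.Icc (0:ℝ) v₂ := ⟨le_trans hx.1 hσrx, hσrv₂⟩
  have hmemIccr : ∀ σ ∈ Sr, σ ∈ Set.Icc (0:ℝ) v₂ :=
    fun σ hσ => ⟨le_trans hx.1 hσ.1.1, hσ.1.2⟩
  have hDσr_le : Metric.infDist (f₂ σr) U ≤ H := by
    refine le_of_forall_pos_le_add ?_
    intro ε hε
    obtain ⟨σ, hσSr, hσlt⟩ := exists_lt_of_csInf_lt hSrne (by linarith : sInf Sr < σr + ε)
    have hσge : σr ≤ σ := csInf_le hSrbdd hσSr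
    have := hDlip σr hσrmem σ (hmemIccr σ hσSr)
    have habs : |σr - σ| ≤ ε := by rw [abs_of_nonpos (by linarith)]; linarith
    linarith [hσSr.2]
  have hσrgt : x < σr := by
    rcases lt_or_eq_of_le hσrx with h' | h'
    · exact h'
    · exfalso; rw [← h'] at hDσr_le; linarith
  have hDright : ∀ σ, x ≤ σ → σ < σr → H < Metric.infDist (f₂ σ) U := by
    intro σ hσge hσlt
    by_contra hcon2
    push_neg at hcon2
    have hmem : σ ∈ Sr := ⟨⟨hσge, le_trans (le_of_lt hσlt) hσrv₂⟩, hcon2⟩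
    exact absurd (csInf_le hSrbdd hmem) (not_le_of_gt hσlt)
  have hDσr_ge : H ≤ Metric.infDist (f₂ σr) U := by
    by_contra hcon2
    push_neg at hcon2
    set ε : ℝ := min ((H - Metric.infDist (f₂ σr) U) / 2) ((σr - x) / 2) with hεdef
    have hεpos : 0 < ε := lt_min (by linarith) (by linarith)
    have hσ' : x ≤ σr - ε := by
      have : ε ≤ (σr - x) / 2 := min_le_right _ _
      linarith
    have hlt : H < Metric.infDist (f₂ (σr - ε)) U := hDright _ hσ' (by linarith)
    have hmem' : σr - ε ∈ Set.Icc (0:ℝ) v₂ := ⟨le_trans hx.1 hσ', by linarith [hσrv₂]⟩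
    have := hDlip (σr - ε) hmem' σr hσrmem
    have habs : |σr - ε - σr| = ε := by
      rw [show σr - ε - σr = -ε by ring, abs_neg, abs_of_pos hεpos]
    rw [habs] at this
    have hε2 : ε ≤ (H - Metric.infDist (f₂ σr) U) / 2 := min_le_left _ _
    linarith
  have hσlσr : σl ≤ σr := le_trans hσlx hσrx
  -- The whole arc stays at distance ≥ H from U.
  have hDarc : ∀ σ ∈ Set.Icc σl σr, H ≤ Metric.infDist (f₂ σ) U := by
    intro σ hσ
    rcases le_or_gt σ x with hle | hgt
    · rcases eq_or_lt_of_le hσ.1 with heq | hlt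
      · rw [← heq]; exact hDσl_ge
      · exact le_of_lt (hDleft σ hlt hle)
    · rcases eq_or_lt_of_le hσ.2 with heq | hlt
      · rw [heq]; exact hDσr_ge
      · exact le_of_lt (hDright σ (le_of_lt hgt) hlt)
  have harcmem : ∀ σ ∈ Set.Icc σl σr, σ ∈ Set.Icc (0:ℝ) v₂ :=
    fun σ hσ => ⟨le_trans hσl0 hσ.1, le_trans hσ.2 hσrv₂⟩
  -- The arc is long: both moat halves have length > δ - H.
  have hlenl : δ - H < x - σl := by
    have := hDlip x hxmem σl hσlv₂
    have habs : |x - σl| = x - σl := abs_of_nonneg (by linarith)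
    rw [habs] at this
    linarith
  have hlenr : δ - H < σr - x := by
    have := hDlip x hxmem σr hσrmem
    have habs : |x - σr| = σr - x := by
      rw [abs_of_nonpos (by linarith)]; ring
    rw [habs] at this
    linarith
  -- Endpoints of the arc, nearby points of U, and the bridge.
  set ql : X := f₂ σl with hqldef
  set p : X := f₂ σr with hpdef
  obtain ⟨ul, hulU, hulq⟩ := (Metric.infDist_lt_iff hUne).1
    (show Metric.infDist ql U < H + 1 by rw [hqldef]; linarith)
  obtain ⟨q, hqU, hqd⟩ := (Metric.infDist_lt_iff hUne).1
    (show Metric.infDist p U < H + 1 by rw [hpdef]; linarith)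
  obtain ⟨g, vg, hgbr⟩ := hgeo ql ul
  set Br : Set X := g '' Set.Icc (0:ℝ) vg with hBrdef
  have hvgval : vg = dist ql ul := by
    have := hgbr.1.2 0 ⟨le_refl _, hgbr.1.1⟩ vg ⟨hgbr.1.1, le_refl _⟩
    rw [hgbr.2.1, hgbr.2.2] at this
    rw [this, abs_of_nonpos (by linarith [hgbr.1.1])]; ring
  have hvglt : vg < H + 1 := by rw [hvgval]; exact hulq
  have hBrnear : ∀ z ∈ Br, dist z ql ≤ vg := by
    rintro z ⟨s, hs, rfl⟩
    have := hgbr.1.2 s hs 0 ⟨le_refl _, hgbr.1.1⟩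
    rw [hgbr.2.1] at this
    rw [this, abs_of_nonneg (by linarith [hs.1] : (0:ℝ) ≤ s - 0)]
    linarith [hs.2]
  -- Assemble the quasigeodesic subspaces.
  have hBr : IsQuasigeodesicSubspace Λ₁ K₁ Br :=
    geodesic_subsegment_qgs hgbr.1 (le_refl 0) (le_refl vg) hΛ₁one hK₁pos
  have hβ : IsQuasigeodesicSubspace Λ₂ K₂ (U ∪ Br) := by
    have hint : (U ∩ Br).Nonempty :=
      ⟨ul, hulU, ⟨vg, ⟨hgbr.1.1, le_refl _⟩, hgbr.2.2⟩⟩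
    exact (h2 _ _ hU hBr hint).mono hl₂ (le_max_left _ _) (le_max_left _ _)
  set α : Set X := f₂ '' Set.Icc σl σr with hαdef
  have hα : IsQuasigeodesicSubspace Λ₂ K₂ α :=
    geodesic_subsegment_qgs hg2.1 hσl0 hσrv₂ hΛ₂one hK₂pos
  have hqlα : ql ∈ α := ⟨σl, ⟨le_refl _, hσlσr⟩, rfl⟩
  have hqlBr : ql ∈ Br := ⟨0, ⟨le_refl _, hgbr.1.1⟩, hgbr.2.1⟩
  have hW : IsQuasigeodesicSubspace lam C (α ∪ (U ∪ Br)) :=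
    h3 _ _ hα hβ ⟨ql, hqlα, Or.inr hqlBr⟩
  -- Get a quasigeodesic from p to q inside the union.
  have hpα : p ∈ α := ⟨σr, ⟨hσlσr, le_refl _⟩, rfl⟩
  obtain ⟨F, w, hFqg, hF0, hFw, hFim⟩ := hW p (Or.inl hpα) q (Or.inr (Or.inl hqU))
  have hw0 : 0 ≤ w := hFqg.1
  have h0w : (0:ℝ) ∈ Set.Icc (0:ℝ) w := ⟨le_refl _, hw0⟩
  have hww : w ∈ Set.Icc (0:ℝ) w := ⟨hw0, le_refl _⟩
  -- Bound the parameter length of F.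
  have hwle : w ≤ lam * (H + 1 + C) := by
    have hlow := (hFqg.2 0 h0w w hww).1
    rw [hF0, hFw] at hlow
    have habs : |0 - w| = w := by rw [abs_of_nonpos (by linarith)]; ring
    rw [habs] at hlow
    have h1' : lam⁻¹ * w ≤ H + 1 + C := by linarith
    have h2' := mul_le_mul_of_nonneg_left h1' (le_of_lt hlam)
    rwa [← mul_assoc, mul_inv_cancel₀ (ne_of_gt hlam), one_mul] at h2'
  -- All values of F are within R of p.
  have hball : ∀ t ∈ Set.Icc (0:ℝ) w, dist p (F t) ≤ R := by
    intro t ht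
    have hup := (hFqg.2 0 h0w t ht).2
    rw [hF0] at hup
    have habs : |0 - t| = t := by rw [abs_of_nonpos (by linarith [ht.1])]; ring
    rw [habs] at hup
    have h1' : lam * t ≤ lam * (lam * (H + 1 + C)) :=
      mul_le_mul_of_nonneg_left (le_trans ht.2 hwle) (le_of_lt hlam)
    simp only [hRdef]
    linarith
  -- The last time F is on the arc α.
  set S : Set ℝ := {t | t ∈ Set.Icc (0:ℝ) w ∧ F t ∈ α} with hSdef
  have h0S : (0:ℝ) ∈ S := ⟨h0w, by rw [hF0]; exact hpα⟩
  have hSne : S.Nonempty := ⟨0, h0S⟩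
  have hSbdd : BddAbove S := ⟨w, fun t ht => ht.1.2⟩
  set τ : ℝ := sSup S with hτdef
  have hτ0 : 0 ≤ τ := le_csSup hSbdd h0S
  have hτw : τ ≤ w := csSup_le hSne (fun t ht => ht.1.2)
  have hqnotα : q ∉ α := by
    rintro ⟨σ, hσ, hσq⟩
    have h0' : Metric.infDist (f₂ σ) U = 0 := by rw [hσq]; exact Metric.infDist_zero_of_mem hqU
    have := hDarc σ hσ
    rw [h0'] at this
    linarith
  have hwnotS : w ∉ S := by
    intro hmem
    have h2' : F w ∈ α := hmem.2
    rw [hFw] at h2'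
    exact hqnotα h2'
  -- Extract a jump pair.
  obtain ⟨t₁, ht₁S, ht₁gt⟩ := exists_lt_of_lt_csSup hSne (by linarith : τ - 1 < sSup S)
  have ht₁le : t₁ ≤ τ := le_csSup hSbdd ht₁S
  set t₂ : ℝ := min (τ + 1) w with ht₂def
  have ht₂mem : t₂ ∈ Set.Icc (0:ℝ) w := ⟨le_min (by linarith) hw0, min_le_right _ _⟩
  have ht₂ge : τ ≤ t₂ := le_min (by linarith) hτw
  have ht₂notS : t₂ ∉ S := by
    intro hmem
    rcases le_total (τ + 1) w with hcase | hcase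
    · have : t₂ = τ + 1 := min_eq_left hcase
      have := le_csSup hSbdd hmem
      rw [‹t₂ = τ + 1›] at this
      linarith
    · have : t₂ = w := min_eq_right hcase
      rw [this] at hmem
      exact hwnotS hmem
  have hFt₂notα : F t₂ ∉ α := fun hmem => ht₂notS ⟨ht₂mem, hmem⟩
  have hFt₂W : F t₂ ∈ α ∪ (U ∪ Br) := hFim ⟨t₂, ht₂mem, rfl⟩
  have hFt₂UB : F t₂ ∈ U ∪ Br := by
    rcases hFt₂W with h' | h'
    · exact absurd h' hFt₂notα
    · exact h'
  -- The jump is short.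
  have hjump : dist (F t₁) (F t₂) ≤ J := by
    have hup := (hFqg.2 t₁ ht₁S.1 t₂ ht₂mem).2
    have habs : |t₁ - t₂| ≤ 2 := by
      rw [abs_of_nonpos (by linarith)]
      have : t₂ ≤ τ + 1 := min_le_left _ _
      linarith
    have h1' : lam * |t₁ - t₂| ≤ lam * 2 := mul_le_mul_of_nonneg_left habs (le_of_lt hlam)
    simp only [hJdef]
    linarith
  -- F t₁ lies on the arc.
  obtain ⟨σ, hσmem, hσval⟩ := ht₁S.2
  -- Final case analysis.
  rcases hFt₂UB with hU' | hBr'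
  · -- Jump lands in U: contradicts the moat height.
    have h5' : Metric.infDist (f₂ σ) U ≤ dist (f₂ σ) (F t₂) := Metric.infDist_le_dist_of_mem hU'
    have h6' : dist (f₂ σ) (F t₂) ≤ J := by rw [hσval]; exact hjump
    have h7' := hDarc σ hσmem
    simp only [hHdef] at h7'
    linarith
  · -- Jump lands on the bridge: contradicts the ball bound, since the bridge is far away.
    have hd2 : dist (F t₂) ql ≤ vg := hBrnear _ hBr'
    have hd3 : dist (f₂ σ) ql ≤ J + vg := by
      calc dist (f₂ σ) ql ≤ dist (f₂ σ) (F t₂) + dist (F t₂) ql := dist_triangle _ _ _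
        _ ≤ J + vg := by rw [hσval]; linarith
    have hdist_eq : dist (f₂ σ) ql = σ - σl := by
      rw [hqldef, hg2.1.2 σ (harcmem σ hσmem) σl hσlv₂,
        abs_of_nonneg (by linarith [hσmem.1] : (0:ℝ) ≤ σ - σl)]
    have hσsmall : σ - σl ≤ J + vg := by rw [← hdist_eq]; exact hd3
    have hdist_pσ : dist p (f₂ σ) = σr - σ := by
      rw [hpdef, hg2.1.2 σr hσrmem σ (harcmem σ hσmem),
        abs_of_nonneg (by linarith [hσmem.2] : (0:ℝ) ≤ σr - σ)]
    have hballt₁ : dist p (F t₁) ≤ R := hball t₁ ht₁S.1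
    rw [← hσval, hdist_pσ] at hballt₁
    -- σr - σ is huge: the arc length exceeds 2(δ - H), and σ is within J + vg of σl.
    have : 2 * (δ - H) < σr - σl := by linarith
    simp only [hδdef] at this hballt₁ ⊢
    linarith [hvglt]
end
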